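/- arXiv:2004.14954 — 3 statements merged into one kernel-verified Lean document; each statement's English description precedes it below -/
import Mathlib

section
/- For any positive integers N and L, there exists a fully connected ReLU network φ× ∈ F_{2,1}(L+1, 9N) such that (1) |φ×(x,y) − xy| ≤ 12 N^{−L} for all x,y ∈ [0,1], and (2) |φ×(x,y)| ≤ 1 for all x,y ∈ [0,1]. -/
open Finset

/-- Iterated hidden layers of a fully connected ReLU network of width `W`:
starting from `x0`, apply `k` further affine-plus-shifted-ReLU layers
(`A k` is the weight matrix `A_{k+2}` and `v (k+1)` the shift vector `v_{k+2}`). -/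
noncomputable def hiddenIter (W : ℕ) (A : ℕ → Matrix (Fin W) (Fin W) ℝ)
    (v : ℕ → Fin W → ℝ) (x0 : Fin W → ℝ) : ℕ → Fin W → ℝ
  | 0 => x0
  | k + 1 => fun i => max (((A k).mulVec (hiddenIter W A v x0 k)) i - v (k + 1) i) 0

/-- The class `F_{d,q}(L,W)` of fully connected ReLU networks with depth `L`
(number of hidden layers), width `W`, input dimension `d`, output dimension `q`:
`f(z) = v_{L+1} + A_{L+1} σ_{v_L}(A_L σ_{v_{L−1}}(⋯ A_2 σ_{v_1}(A_1 z)⋯))`. -/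
noncomputable def NNclass (d q L W : ℕ) : Set ((Fin d → ℝ) → (Fin q → ℝ)) :=
  {f | ∃ (A₁ : Matrix (Fin W) (Fin d) ℝ) (A : ℕ → Matrix (Fin W) (Fin W) ℝ)
      (v : ℕ → Fin W → ℝ) (Aout : Matrix (Fin q) (Fin W) ℝ) (vout : Fin q → ℝ),
      ∀ z, f z = vout + Aout.mulVec
        (hiddenIter W A v (fun i => max ((A₁.mulVec z) i - v 0 i) 0) (L - 1))}

/-- The class `F_{d,1}(L,W)` of scalar-valued fully connected ReLU networks. -/
noncomputable def NNscalar (d L W : ℕ) : Set ((Fin d → ℝ) → ℝ) :=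
  {f | ∃ g ∈ NNclass d 1 L W, ∀ z, f z = g z 0}


noncomputable def cw (M : ℕ) (k : ℕ) : ℝ := if k = 0 then M else 2*M*(-1:ℝ)^k
noncomputable def qw (M : ℕ) (k : ℕ) : ℝ := if k = 0 then (M:ℝ)-1 else -2

noncomputable def gfun (M : ℕ) (v : ℝ) : ℝ :=
  ∑ k ∈ Finset.range M, cw M k * max (v - k/M) 0

noncomputable def Qfun (M : ℕ) (v : ℝ) : ℝ :=
  ∑ k ∈ Finset.range M, (qw M k / M) * max (v - k/M) 0

lemma gsum (M : ℕ) (j : ℕ) (r : ℝ) :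
    ∑ k ∈ Finset.range (j+1), cw M k * ((j:ℝ) + r - k) =
      if Even j then (M:ℝ)*r else (M:ℝ)*(1-r) := by
  induction j generalizing r with
  | zero => simp [cw]
  | succ j ih =>
    rw [Finset.sum_range_succ]
    have h2 : ∑ k ∈ Finset.range (j+1), cw M k * (((j+1:ℕ)) + r - k)
        = ∑ k ∈ Finset.range (j+1), cw M k * ((j:ℝ) + (r+1) - k) := by
      apply Finset.sum_congr rfl; intro k _; push_cast; ring
    rw [h2, ih (r+1)]
    rcases Nat.even_or_odd j with he | ho
    · have hne : ¬ Even (j+1) := by simp [Nat.even_add_one, he]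
      have hp : (-1:ℝ)^(j+1) = -1 := Odd.neg_one_pow (by exact_mod_cast Nat.not_even_iff_odd.mp hne)
      simp only [if_pos he, if_neg hne, cw, if_neg (Nat.succ_ne_zero j), hp]
      push_cast; ring
    · have hne : ¬ Even j := Nat.not_even_iff_odd.mpr ho
      have hev : Even (j+1) := Nat.even_add_one.mpr hne
      have hp : (-1:ℝ)^(j+1) = 1 := Even.neg_one_pow (by exact_mod_cast hev)
      simp only [if_neg hne, if_pos hev, cw, if_neg (Nat.succ_ne_zero j), hp]
      push_cast; ring

lemma qsum (M : ℕ) (j : ℕ) (r : ℝ) :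
    ∑ k ∈ Finset.range (j+1), qw M k * ((j:ℝ) + r - k) =
      ((j:ℝ)+r)*((M:ℝ)-(j:ℝ)-r) - r*(1-r) := by
  induction j generalizing r with
  | zero => simp [qw]; ring
  | succ j ih =>
    rw [Finset.sum_range_succ]
    have h2 : ∑ k ∈ Finset.range (j+1), qw M k * (((j+1:ℕ)) + r - k)
        = ∑ k ∈ Finset.range (j+1), qw M k * ((j:ℝ) + (r+1) - k) := by
      apply Finset.sum_congr rfl; intro k _; push_cast; ring
    rw [h2, ih (r+1)]
    simp only [qw, if_neg (Nat.succ_ne_zero j)]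
    push_cast; ring

lemma sum_split_eval (M j : ℕ) (hj : j < M) (r : ℝ) (hr0 : 0 ≤ r) (hr1 : r ≤ 1)
    (w : ℕ → ℝ) :
    ∑ k ∈ Finset.range M, w k * max (((j:ℝ)+r)/M - k/M) 0 =
      ∑ k ∈ Finset.range (j+1), w k * (((j:ℝ) + r - k)/M) := by
  have hM : (0:ℝ) < M := by exact_mod_cast lt_of_le_of_lt (Nat.zero_le j) hj
  rw [Finset.range_eq_Ico, ← Finset.sum_Ico_consecutive _ (Nat.zero_le (j+1)) hj]
  have h2 : ∑ k ∈ Finset.Ico (j+1) M, w k * max (((j:ℝ)+r)/M - k/M) 0 = 0 := by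
    apply Finset.sum_eq_zero; intro k hk
    have hk1 : (j:ℝ) + 1 ≤ k := by exact_mod_cast (Finset.mem_Ico.mp hk).1
    have : ((j:ℝ)+r)/M - k/M ≤ 0 := by
      rw [div_sub_div_same]
      exact div_nonpos_iff.mpr (Or.inr ⟨by nlinarith, hM.le⟩)
    rw [max_eq_right this, mul_zero]
  rw [h2, add_zero]
  rw [Finset.range_eq_Ico]; apply Finset.sum_congr rfl; intro k hk
  have hk1 : (k:ℝ) ≤ j := by exact_mod_cast Nat.lt_succ_iff.mp (Finset.mem_Ico.mp hk).2
  have : max (((j:ℝ)+r)/M - k/M) 0 = ((j:ℝ) + r - k)/M := by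
    rw [div_sub_div_same, max_eq_left]
    exact div_nonneg (by nlinarith) hM.le
  rw [this]

lemma gval (M j : ℕ) (hj : j < M) (r : ℝ) (hr0 : 0 ≤ r) (hr1 : r ≤ 1) :
    gfun M (((j:ℝ)+r)/M) = if Even j then r else 1-r := by
  have hM : (0:ℝ) < M := by exact_mod_cast lt_of_le_of_lt (Nat.zero_le j) hj
  rw [gfun, sum_split_eval M j hj r hr0 hr1]
  have : ∑ k ∈ Finset.range (j+1), cw M k * (((j:ℝ) + r - k)/M)
      = (∑ k ∈ Finset.range (j+1), cw M k * ((j:ℝ) + r - k))/M := by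
    rw [Finset.sum_div]; apply Finset.sum_congr rfl; intro k _; ring
  rw [this, gsum]
  split <;> field_simp

lemma Qval (M j : ℕ) (hj : j < M) (r : ℝ) (hr0 : 0 ≤ r) (hr1 : r ≤ 1) :
    Qfun M (((j:ℝ)+r)/M) =
      (((j:ℝ)+r)/M) * (1 - ((j:ℝ)+r)/M) - (r*(1-r))/((M:ℝ)*M) := by
  have hM : (0:ℝ) < M := by exact_mod_cast lt_of_le_of_lt (Nat.zero_le j) hj
  rw [Qfun, sum_split_eval M j hj r hr0 hr1]
  have : ∑ k ∈ Finset.range (j+1), (qw M k / M) * (((j:ℝ) + r - k)/M)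
      = (∑ k ∈ Finset.range (j+1), qw M k * ((j:ℝ) + r - k))/(M*M) := by
    rw [Finset.sum_div]; apply Finset.sum_congr rfl; intro k _; ring
  rw [this, qsum]
  field_simp
  ring

noncomputable def Gseq (M : ℕ) (t : ℝ) : ℕ → ℝ
  | 0 => t
  | s+1 => gfun M (Gseq M t s)

noncomputable def Useq (M : ℕ) (t : ℝ) : ℕ → ℝ
  | 0 => t
  | s+1 => Useq M t s - ((M:ℝ)⁻¹)^(2*s) * Qfun M (Gseq M t s)

lemma decomp (M : ℕ) (hM : 0 < M) (r : ℝ) (hr0 : 0 ≤ r) (hr1 : r ≤ 1) :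
    ∃ j : ℕ, j < M ∧ ∃ r₂ : ℝ, 0 ≤ r₂ ∧ r₂ ≤ 1 ∧ (M:ℝ)*r = j + r₂ := by
  have hM' : (0:ℝ) < M := by exact_mod_cast hM
  rcases eq_or_lt_of_le hr1 with h1 | h1
  · refine ⟨M-1, by omega, 1, by norm_num, by norm_num, ?_⟩
    have : ((M-1:ℕ):ℝ) = (M:ℝ)-1 := by
      push_cast [Nat.cast_sub (by omega : 1 ≤ M)]; ring
    rw [this, h1]; ring
  · set z := ⌊(M:ℝ)*r⌋ with hz
    have hz0 : 0 ≤ z := Int.floor_nonneg.mpr (by positivity)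
    have hle : (z:ℝ) ≤ (M:ℝ)*r := Int.floor_le _
    have hlt : (M:ℝ)*r < (z:ℝ) + 1 := Int.lt_floor_add_one _
    have hzM : (z:ℝ) < (M:ℝ) := by nlinarith
    refine ⟨z.toNat, ?_, (M:ℝ)*r - z, by linarith, by linarith, ?_⟩
    · have : z < (M:ℤ) := by exact_mod_cast hzM
      omega
    · have : ((z.toNat:ℕ):ℝ) = (z:ℝ) := by
        exact_mod_cast Int.toNat_of_nonneg hz0
      rw [this]; ring

lemma invariant (M : ℕ) (hM2 : 2 ≤ M) (hME : Even M)
    (t : ℝ) (ht0 : 0 ≤ t) (ht1 : t ≤ 1) :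
    ∀ s : ℕ, ∃ (j : ℕ) (r : ℝ), 0 ≤ r ∧ r ≤ 1 ∧ ((M:ℝ)^s * t = j + r) ∧
      Gseq M t s = (if Even j then r else 1-r) ∧
      Useq M t s = t^2 + ((M:ℝ)⁻¹)^(2*s) * (r*(1-r)) := by
  have hM' : (0:ℝ) < M := by exact_mod_cast (by omega : 0 < M)
  intro s
  induction s with
  | zero =>
    exact ⟨0, t, ht0, ht1, by simp, by simp [Gseq], by simp [Useq]; ring⟩
  | succ s ih =>
    obtain ⟨j, r, hr0, hr1, heq, hG, hU⟩ := ih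
    obtain ⟨j₂, hj₂, r₂, h20, h21, h2eq⟩ := decomp M (by omega) r hr0 hr1
    refine ⟨M*j + j₂, r₂, h20, h21, ?_, ?_, ?_⟩
    · push_cast
      calc (M:ℝ)^(s+1) * t = (M:ℝ) * ((M:ℝ)^s * t) := by ring
      _ = (M:ℝ)*j + ((M:ℝ)*r) := by rw [heq]; ring
      _ = (M:ℝ)*j + j₂ + r₂ := by rw [h2eq]; ring
    · -- G step
      have hMj : Even (M*j) := hME.mul_right j
      have hEvenIff : (Even (M*j + j₂)) ↔ Even j₂ := by
        rw [Nat.even_add]; simp [hMj]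
      have hgoal : gfun M (Gseq M t s) = (if Even j₂ then r₂ else 1 - r₂) := by
        by_cases hj : Even j
        · have hrval : r = (((j₂:ℕ):ℝ) + r₂)/M := by
            field_simp; linarith [h2eq]
          rw [hG, if_pos hj, hrval, gval M j₂ hj₂ r₂ h20 h21]
        · have hj₂le : j₂ ≤ M - 1 := by omega
          have hcast : ((M - 1 - j₂:ℕ):ℝ) = (M:ℝ) - 1 - j₂ := by
            push_cast [Nat.cast_sub (by omega : j₂ ≤ M - 1), Nat.cast_sub (by omega : 1 ≤ M)]
            ring
          have hrval : 1 - r = (((M-1-j₂:ℕ):ℝ) + (1-r₂))/M := by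
            rw [hcast]; field_simp; linarith [h2eq]
          have hEv2 : Even (M-1-j₂) ↔ ¬ Even j₂ := by
            rcases hME with ⟨m, hm⟩
            subst hm
            rw [Nat.even_iff, Nat.even_iff]; omega
          rw [hG, if_neg hj, hrval, gval M (M-1-j₂) (by omega) (1-r₂) (by linarith) (by linarith)]
          by_cases h2 : Even j₂
          · rw [if_neg (by rw [hEv2]; exact not_not.mpr h2), if_pos h2]; ring
          · rw [if_pos (hEv2.mpr h2), if_neg h2]
      show gfun M (Gseq M t s) = _
      rw [hgoal, if_congr hEvenIff rfl rfl]
    · -- U step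
      have hQ : Qfun M (Gseq M t s) = r*(1-r) - (r₂*(1-r₂))/((M:ℝ)*M) := by
        by_cases hj : Even j
        · have hrval : r = (((j₂:ℕ):ℝ) + r₂)/M := by
            field_simp; linarith [h2eq]
          rw [hG, if_pos hj, hrval, Qval M j₂ hj₂ r₂ h20 h21, ← hrval]
        · have hcast : ((M - 1 - j₂:ℕ):ℝ) = (M:ℝ) - 1 - j₂ := by
            push_cast [Nat.cast_sub (by omega : j₂ ≤ M - 1), Nat.cast_sub (by omega : 1 ≤ M)]
            ring
          have hrval : 1 - r = (((M-1-j₂:ℕ):ℝ) + (1-r₂))/M := by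
            rw [hcast]; field_simp; linarith [h2eq]
          rw [hG, if_neg hj, hrval, Qval M (M-1-j₂) (by omega) (1-r₂) (by linarith) (by linarith), ← hrval]
          ring
      show Useq M t s - ((M:ℝ)⁻¹)^(2*s) * Qfun M (Gseq M t s) = _
      rw [hU, hQ]
      have hpow : ((M:ℝ)⁻¹)^(2*(s+1)) = ((M:ℝ)⁻¹)^(2*s) / ((M:ℝ)*M) := by
        rw [show 2*(s+1) = 2*s + 2 by ring, pow_add]
        field_simp
      rw [hpow]
      field_simp
      ring

lemma Useq_bounds (M : ℕ) (hM2 : 2 ≤ M) (hME : Even M)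
    (t : ℝ) (ht0 : 0 ≤ t) (ht1 : t ≤ 1) (s : ℕ) :
    t^2 ≤ Useq M t s ∧ Useq M t s ≤ t ∧
      Useq M t s - t^2 ≤ (1/4) * ((M:ℝ)⁻¹)^(2*s) := by
  have hM' : (0:ℝ) < M := by exact_mod_cast (by omega : 0 < M)
  obtain ⟨j, r, hr0, hr1, heq, _, hU⟩ := invariant M hM2 hME t ht0 ht1 s
  have hεpos : (0:ℝ) < ((M:ℝ)⁻¹)^(2*s) := by positivity
  have hrr : 0 ≤ r*(1-r) := by nlinarith
  have hrr4 : r*(1-r) ≤ 1/4 := by nlinarith [sq_nonneg (r - 1/2)]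
  refine ⟨by nlinarith, ?_, by nlinarith⟩
  -- Useq ≤ t
  have hM1 : (1:ℝ) ≤ (M:ℝ) := by exact_mod_cast (by omega : 1 ≤ M)
  have hm1 : (1:ℝ) ≤ (M:ℝ)^s := one_le_pow₀ hM1
  have hmpos : (0:ℝ) < (M:ℝ)^s := by positivity
  have hε : ((M:ℝ)⁻¹)^(2*s) * ((M:ℝ)^s * (M:ℝ)^s) = 1 := by
    rw [inv_pow, two_mul, pow_add]
    field_simp
  have hkey : r*(1-r) ≤ ((M:ℝ)^s * t) * ((M:ℝ)^s - (M:ℝ)^s * t) := by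
    rw [heq]
    have hjm : (j:ℝ) + r ≤ (M:ℝ)^s := by rw [← heq]; nlinarith
    rcases le_or_gt ((M:ℝ)^s) (j:ℝ) with hc | hc
    · have hr00 : r = 0 := by linarith
      rw [hr00]; nlinarith
    · have hnat : j < M^s := by
        have h0 : (j:ℝ) < ((M^s : ℕ):ℝ) := by push_cast; exact hc
        exact_mod_cast h0
      have hj1 : (j:ℝ) + 1 ≤ (M:ℝ)^s := by
        have h' : ((j+1:ℕ):ℝ) ≤ ((M^s:ℕ):ℝ) := by exact_mod_cast hnat
        push_cast at h'; linarith
      have h1 : (0:ℝ) ≤ (j:ℝ) := by positivity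
      nlinarith [mul_le_mul (by linarith : r ≤ (j:ℝ) + r)
        (by linarith : 1 - r ≤ (M:ℝ)^s - ((j:ℝ)+r)) (by linarith) (by linarith)]
  -- now conclude
  have := mul_le_mul_of_nonneg_left hkey hεpos.le
  calc Useq M t s = t^2 + ((M:ℝ)⁻¹)^(2*s) * (r*(1-r)) := hU
  _ ≤ t^2 + ((M:ℝ)⁻¹)^(2*s) * (((M:ℝ)^s * t) * ((M:ℝ)^s - (M:ℝ)^s * t)) := by linarith
  _ = t^2 + (((M:ℝ)⁻¹)^(2*s) * ((M:ℝ)^s * (M:ℝ)^s)) * (t * (1 - t)) := by ring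
  _ = t := by rw [hε]; ring

/-! ### Network encoding -/

lemma idx_div (w b k : ℕ) (hw : 0 < w) (hk : k < w) : (b*w + k)/w = b := by
  rw [mul_comm, Nat.mul_add_div hw, Nat.div_eq_of_lt hk, add_zero]

lemma idx_mod (w b k : ℕ) (hk : k < w) : (b*w + k) % w = k := by
  rw [mul_comm, Nat.mul_add_mod, Nat.mod_eq_of_lt hk]

lemma sum_trunc (a b : ℕ) (hab : a ≤ b) (f : ℕ → ℝ) :
    ∑ k ∈ Finset.range b, (if k < a then f k else 0) = ∑ k ∈ Finset.range a, f k := by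
  rw [← Finset.sum_subset (Finset.range_subset_range.mpr hab)
      (fun k _ hk => if_neg (fun h => hk (Finset.mem_range.mpr h)))]
  exact Finset.sum_congr rfl (fun k hk => if_pos (Finset.mem_range.mp hk))

lemma sum_range_mul (w c : ℕ) (F : ℕ → ℝ) :
    ∑ j ∈ Finset.range (c*w), F j
      = ∑ b ∈ Finset.range c, ∑ k ∈ Finset.range w, F (b*w + k) := by
  induction c with
  | zero => simp
  | succ c ih =>
    rw [Finset.sum_range_succ, ← ih, show (c+1)*w = c*w + w by ring,
      Finset.sum_range_add]

noncomputable def wgt : ℕ → ℝ := fun b => if b = 0 then -(1/2) else if b = 1 then -(1/2) else 2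

noncomputable def tIn (x y : ℝ) : ℕ → ℝ :=
  fun b => if b = 0 then x else if b = 1 then y else (x+y)/2

lemma tIn_mem (x y : ℝ) (hx0 : 0 ≤ x) (hx1 : x ≤ 1) (hy0 : 0 ≤ y) (hy1 : y ≤ 1) (b : ℕ) :
    0 ≤ tIn x y b ∧ tIn x y b ≤ 1 := by
  unfold tIn; split_ifs <;> constructor <;> linarith

noncomputable def rowOut (N : ℕ) (m : ℕ) (k : ℕ) : ℝ :=
  if k < 2*N then -(((2*N:ℕ):ℝ)⁻¹)^(2*m) * (qw (2*N) k / ((2*N:ℕ):ℝ)) else if k = 2*N then 1 else 0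

noncomputable def netAfun (N : ℕ) (m : ℕ) (iv jv : ℕ) : ℝ :=
  if jv / (3*N) = iv / (3*N) then
    (if iv % (3*N) < 2*N then (if jv % (3*N) < 2*N then cw (2*N) (jv % (3*N)) else 0)
     else if iv % (3*N) = 2*N then rowOut N m (jv % (3*N))
     else 0)
  else 0

noncomputable def netA1fun (N : ℕ) (jv : ℕ) (d : Fin 2) : ℝ :=
  if jv % (3*N) ≤ 2*N then
    (if jv/(3*N) = 0 then (if d = 0 then 1 else 0)
     else if jv/(3*N) = 1 then (if d = 1 then 1 else 0)
     else 1/2)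
  else 0

noncomputable def netvF (N : ℕ) (jv : ℕ) : ℝ :=
  if jv % (3*N) < 2*N then (↑(jv % (3*N)) / ((2*N:ℕ):ℝ)) else 0

noncomputable def expF (N : ℕ) (x y : ℝ) (m : ℕ) (jv : ℕ) : ℝ :=
  if jv % (3*N) < 2*N then
    max (Gseq (2*N) (tIn x y (jv / (3*N))) m - (↑(jv % (3*N)) / ((2*N:ℕ):ℝ))) 0
  else if jv % (3*N) = 2*N then Useq (2*N) (tIn x y (jv / (3*N))) m
  else 0

/-- block state: value of a neuron within one block. -/
noncomputable def blockSt (N : ℕ) (t : ℝ) (m : ℕ) (k : ℕ) : ℝ :=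
  if k < 2*N then max (Gseq (2*N) t m - ((k:ℝ) / ((2*N:ℕ):ℝ))) 0
  else if k = 2*N then Useq (2*N) t m
  else 0

lemma expF_block (N : ℕ) (hN : 0 < N) (x y : ℝ) (m b k : ℕ) (hk : k < 3*N) :
    expF N x y m (b*(3*N) + k) = blockSt N (tIn x y b) m k := by
  unfold expF blockSt
  rw [idx_div (3*N) b k (by omega) hk, idx_mod (3*N) b k hk]

lemma inner_sum_G (N : ℕ) (hN : 0 < N) (m : ℕ) (t : ℝ) :
    ∑ k ∈ Finset.range (3*N), (if k < 2*N then cw (2*N) k else 0) * blockSt N t m k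
      = Gseq (2*N) t (m+1) := by
  have hcong : ∀ k ∈ Finset.range (3*N),
      (if k < 2*N then cw (2*N) k else 0) * blockSt N t m k
        = if k < 2*N then cw (2*N) k * max (Gseq (2*N) t m - ((k:ℝ) / ((2*N:ℕ):ℝ))) 0 else 0 := by
    intro k _
    by_cases h1 : k < 2*N
    · simp [blockSt, h1]
    · simp [h1]
  rw [Finset.sum_congr rfl hcong, sum_trunc (2*N) (3*N) (by omega)]
  rfl

lemma inner_sum_U (N : ℕ) (hN : 0 < N) (m : ℕ) (t : ℝ) :
    ∑ k ∈ Finset.range (3*N), rowOut N m k * blockSt N t m k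
      = Useq (2*N) t (m+1) := by
  have hcong : ∀ k ∈ Finset.range (3*N),
      rowOut N m k * blockSt N t m k
        = if k < 2*N + 1 then
            (if k < 2*N then
              -(((2*N:ℕ):ℝ)⁻¹)^(2*m) * ((qw (2*N) k / ((2*N:ℕ):ℝ)) *
                max (Gseq (2*N) t m - ((k:ℝ) / ((2*N:ℕ):ℝ))) 0)
             else Useq (2*N) t m)
          else 0 := by
    intro k _
    by_cases h1 : k < 2*N
    · rw [if_pos (by omega : k < 2*N+1), if_pos h1]
      unfold rowOut blockSt
      rw [if_pos h1, if_pos h1]; ring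
    · by_cases h2 : k = 2*N
      · subst h2
        rw [if_pos (by omega), if_neg h1]
        unfold rowOut blockSt
        rw [if_neg h1, if_pos rfl, if_neg h1, if_pos rfl, one_mul]
      · rw [if_neg (by omega)]
        unfold rowOut blockSt
        rw [if_neg h1, if_neg h2, zero_mul]
  rw [Finset.sum_congr rfl hcong, sum_trunc (2*N+1) (3*N) (by omega), Finset.sum_range_succ,
    if_neg (lt_irrefl (2*N))]
  have : ∑ k ∈ Finset.range (2*N),
      (if k < 2*N then
        -(((2*N:ℕ):ℝ)⁻¹)^(2*m) * ((qw (2*N) k / ((2*N:ℕ):ℝ)) *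
          max (Gseq (2*N) t m - ((k:ℝ) / ((2*N:ℕ):ℝ))) 0)
       else Useq (2*N) t m)
      = -(((2*N:ℕ):ℝ)⁻¹)^(2*m) * Qfun (2*N) (Gseq (2*N) t m) := by
    rw [Qfun, Finset.mul_sum]
    apply Finset.sum_congr rfl
    intro k hk
    rw [if_pos (Finset.mem_range.mp hk)]
  rw [this]
  show _ = Useq (2*N) t m - (((2*N:ℕ):ℝ)⁻¹)^(2*m) * Qfun (2*N) (Gseq (2*N) t m)
  ring

lemma row_eval (N : ℕ) (hN : 0 < N) (x y : ℝ) (m : ℕ) (iv : ℕ) (hiv : iv < 9*N) :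
    ∑ j ∈ Finset.range (9*N), netAfun N m iv j * expF N x y m j
      = (if iv % (3*N) < 2*N then Gseq (2*N) (tIn x y (iv/(3*N))) (m+1)
         else if iv % (3*N) = 2*N then Useq (2*N) (tIn x y (iv/(3*N))) (m+1)
         else 0) := by
  have hb : iv / (3*N) < 3 := Nat.div_lt_of_lt_mul (by omega)
  rw [show 9*N = 3*(3*N) by ring, sum_range_mul]
  rw [Finset.sum_eq_single_of_mem (iv/(3*N)) (Finset.mem_range.mpr hb)
      (fun b' _ hne => Finset.sum_eq_zero (fun k hk => by
        unfold netAfun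
        rw [idx_div (3*N) b' k (by omega) (Finset.mem_range.mp hk), if_neg hne, zero_mul]))]
  by_cases hp : iv % (3*N) < 2*N
  · rw [if_pos hp, ← inner_sum_G N hN m (tIn x y (iv/(3*N)))]
    apply Finset.sum_congr rfl
    intro k hk
    have hk' := Finset.mem_range.mp hk
    rw [expF_block N hN x y m (iv/(3*N)) k hk']
    unfold netAfun
    rw [idx_div (3*N) (iv/(3*N)) k (by omega) hk', if_pos rfl, if_pos hp,
      idx_mod (3*N) (iv/(3*N)) k hk']
  · by_cases hp2 : iv % (3*N) = 2*N
    · rw [if_neg hp, if_pos hp2, ← inner_sum_U N hN m (tIn x y (iv/(3*N)))]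
      apply Finset.sum_congr rfl
      intro k hk
      have hk' := Finset.mem_range.mp hk
      rw [expF_block N hN x y m (iv/(3*N)) k hk']
      unfold netAfun
      rw [idx_div (3*N) (iv/(3*N)) k (by omega) hk', if_pos rfl, if_neg hp, if_pos hp2,
        idx_mod (3*N) (iv/(3*N)) k hk']
    · rw [if_neg hp, if_neg hp2]
      apply Finset.sum_eq_zero
      intro k hk
      have hk' := Finset.mem_range.mp hk
      unfold netAfun
      rw [idx_div (3*N) (iv/(3*N)) k (by omega) hk', if_pos rfl, if_neg hp, if_neg hp2, zero_mul]

noncomputable def netA1M (N : ℕ) : Matrix (Fin (9*N)) (Fin 2) ℝ :=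
  Matrix.of fun i d => netA1fun N i.val d
noncomputable def netAM (N : ℕ) : ℕ → Matrix (Fin (9*N)) (Fin (9*N)) ℝ :=
  fun m => Matrix.of fun i j => netAfun N m i.val j.val
noncomputable def netvM (N : ℕ) : ℕ → Fin (9*N) → ℝ := fun _ i => netvF N i.val
noncomputable def netAoutM (N L : ℕ) : Matrix (Fin 1) (Fin (9*N)) ℝ :=
  Matrix.of fun _ j => wgt (j.val/(3*N)) * rowOut N L (j.val % (3*N))

lemma state_eval (N : ℕ) (hN : 0 < N) (x y : ℝ)
    (hx0 : 0 ≤ x) (hx1 : x ≤ 1) (hy0 : 0 ≤ y) (hy1 : y ≤ 1) (m : ℕ) :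
    ∀ i : Fin (9*N), hiddenIter (9*N) (netAM N) (netvM N)
      (fun i => max (((netA1M N).mulVec ![x,y]) i - netvM N 0 i) 0) m i
        = expF N x y m i.val := by
  induction m with
  | zero =>
    intro i
    show max (((netA1M N).mulVec ![x,y]) i - netvM N 0 i) 0 = _
    have hmv : (netA1M N).mulVec ![x,y] i
        = (if i.val % (3*N) ≤ 2*N then tIn x y (i.val/(3*N)) else 0) := by
      show ∑ d, netA1fun N i.val d * ![x,y] d = _
      rw [Fin.sum_univ_two]
      by_cases hp : i.val % (3*N) ≤ 2*N
      · by_cases hb0 : i.val/(3*N) = 0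
        · simp [netA1fun, tIn, hp, hb0]
        · by_cases hb1 : i.val/(3*N) = 1
          · simp [netA1fun, tIn, hp, hb0, hb1]
          · simp only [netA1fun, tIn, if_pos hp, if_neg hb0, if_neg hb1]
            simp; ring
      · simp [netA1fun, hp]
    rw [hmv]
    have ht := tIn_mem x y hx0 hx1 hy0 hy1 (i.val/(3*N))
    by_cases hp : i.val % (3*N) < 2*N
    · unfold expF netvM netvF
      rw [if_pos (by omega : i.val % (3*N) ≤ 2*N), if_pos hp, if_pos hp]
      rfl
    · by_cases hp2 : i.val % (3*N) = 2*N
      · unfold expF netvM netvF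
        rw [if_pos (by omega : i.val % (3*N) ≤ 2*N), if_neg hp, if_neg hp, if_pos hp2]
        show max (tIn x y (i.val/(3*N)) - 0) 0 = Useq (2*N) (tIn x y (i.val/(3*N))) 0
        rw [sub_zero, max_eq_left ht.1]
        rfl
      · unfold expF netvM netvF
        rw [if_neg (by omega : ¬ i.val % (3*N) ≤ 2*N), if_neg hp, if_neg hp, if_neg hp2]
        simp
  | succ m ih =>
    intro i
    show max (((netAM N m).mulVec (hiddenIter (9*N) (netAM N) (netvM N)
      (fun i => max (((netA1M N).mulVec ![x,y]) i - netvM N 0 i) 0) m)) i - netvM N (m+1) i) 0 = _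
    have hstate : hiddenIter (9*N) (netAM N) (netvM N)
        (fun i => max (((netA1M N).mulVec ![x,y]) i - netvM N 0 i) 0) m
          = fun j => expF N x y m j.val := funext ih
    rw [hstate]
    have hmv : (netAM N m).mulVec (fun j : Fin (9*N) => expF N x y m j.val) i
        = (if i.val % (3*N) < 2*N then Gseq (2*N) (tIn x y (i.val/(3*N))) (m+1)
           else if i.val % (3*N) = 2*N then Useq (2*N) (tIn x y (i.val/(3*N))) (m+1)
           else 0) := by
      show ∑ j : Fin (9*N), netAfun N m i.val j.val * expF N x y m j.val = _
      rw [Fin.sum_univ_eq_sum_range (fun jv => netAfun N m i.val jv * expF N x y m jv) (9*N)]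
      exact row_eval N hN x y m i.val i.isLt
    rw [hmv]
    have ht := tIn_mem x y hx0 hx1 hy0 hy1 (i.val/(3*N))
    by_cases hp : i.val % (3*N) < 2*N
    · unfold expF netvM netvF
      rw [if_pos hp, if_pos hp, if_pos hp]
    · by_cases hp2 : i.val % (3*N) = 2*N
      · unfold expF netvM netvF
        rw [if_neg hp, if_neg hp, if_pos hp2]
        have hU := Useq_bounds (2*N) (by omega) (even_two_mul N)
          (tIn x y (i.val/(3*N))) ht.1 ht.2 (m+1)
        have h0 : 0 ≤ Useq (2*N) (tIn x y (i.val/(3*N))) (m+1) := by nlinarith [hU.1]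
        rw [sub_zero, max_eq_left h0, if_neg hp]
      · unfold expF netvM netvF
        rw [if_neg hp, if_neg hp, if_neg hp2]
        rw [if_neg hp]
        simp

lemma out_eval (N L : ℕ) (hN : 0 < N) (x y : ℝ) :
    ∑ j ∈ Finset.range (9*N), (wgt (j/(3*N)) * rowOut N L (j % (3*N))) * expF N x y L j
      = 2 * Useq (2*N) ((x+y)/2) (L+1)
        - Useq (2*N) x (L+1)/2 - Useq (2*N) y (L+1)/2 := by
  rw [show 9*N = 3*(3*N) by ring, sum_range_mul]
  have hblock : ∀ b ∈ Finset.range 3,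
      ∑ k ∈ Finset.range (3*N), (wgt ((b*(3*N)+k)/(3*N)) * rowOut N L ((b*(3*N)+k) % (3*N)))
          * expF N x y L (b*(3*N)+k)
        = wgt b * Useq (2*N) (tIn x y b) (L+1) := by
    intro b _
    rw [← inner_sum_U N hN L (tIn x y b), Finset.mul_sum]
    apply Finset.sum_congr rfl
    intro k hk
    have hk' := Finset.mem_range.mp hk
    rw [idx_div (3*N) b k (by omega) hk', idx_mod (3*N) b k hk',
      expF_block N hN x y L b k hk']
    ring
  rw [Finset.sum_congr rfl hblock, Finset.sum_range_succ, Finset.sum_range_succ,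
    Finset.sum_range_succ, Finset.sum_range_zero]
  simp only [wgt, tIn]
  norm_num
  ring

/-- For any positive integers `N, L` there is a ReLU network
`φ× ∈ F_{2,1}(L+1, 9N)` with `|φ×(x,y) − xy| ≤ 12N^{−L}` and `|φ×(x,y)| ≤ 1`
for all `x,y ∈ [0,1]`. -/
theorem statement6 (N L : ℕ) (hN : 0 < N) (hL : 0 < L) :
    ∃ φ ∈ NNscalar 2 (L + 1) (9 * N),
      (∀ x y : ℝ, x ∈ Set.Icc (0 : ℝ) 1 → y ∈ Set.Icc (0 : ℝ) 1 →
        |φ ![x, y] - x * y| ≤ 12 * ((N : ℝ) ^ L)⁻¹) ∧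
      ∀ x y : ℝ, x ∈ Set.Icc (0 : ℝ) 1 → y ∈ Set.Icc (0 : ℝ) 1 → |φ ![x, y]| ≤ 1 := by
  classical
  set g : (Fin 2 → ℝ) → (Fin 1 → ℝ) := fun z => (0 : Fin 1 → ℝ) + (netAoutM N L).mulVec
      (hiddenIter (9*N) (netAM N) (netvM N)
        (fun i => max (((netA1M N).mulVec z) i - netvM N 0 i) 0) L) with hg
  refine ⟨fun z => g z 0, ⟨g, ⟨netA1M N, netAM N, netvM N, netAoutM N L, 0, fun z => by
      rw [Nat.add_sub_cancel]⟩, fun z => rfl⟩, ?_⟩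
  have key : ∀ x y : ℝ, 0 ≤ x → x ≤ 1 → 0 ≤ y → y ≤ 1 →
      g ![x, y] 0 = 2 * Useq (2*N) ((x+y)/2) (L+1)
        - Useq (2*N) x (L+1)/2 - Useq (2*N) y (L+1)/2 := by
    intro x y hx0 hx1 hy0 hy1
    have h1 : g ![x, y] 0 = ∑ j : Fin (9*N),
        (wgt (j.val/(3*N)) * rowOut N L (j.val % (3*N))) *
          (hiddenIter (9*N) (netAM N) (netvM N)
            (fun i => max (((netA1M N).mulVec ![x, y]) i - netvM N 0 i) 0) L j) := by
      rw [hg]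
      show (0:ℝ) + _ = _
      rw [zero_add]
      rfl
    rw [h1]
    have h2 : ∀ j : Fin (9*N),
        (wgt (j.val/(3*N)) * rowOut N L (j.val % (3*N))) *
          (hiddenIter (9*N) (netAM N) (netvM N)
            (fun i => max (((netA1M N).mulVec ![x, y]) i - netvM N 0 i) 0) L j)
        = (wgt (j.val/(3*N)) * rowOut N L (j.val % (3*N))) * expF N x y L j.val := by
      intro j
      rw [state_eval N hN x y hx0 hx1 hy0 hy1 L j]
    rw [Finset.sum_congr rfl (fun j _ => h2 j),
      Fin.sum_univ_eq_sum_range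
        (fun jv => (wgt (jv/(3*N)) * rowOut N L (jv % (3*N))) * expF N x y L jv) (9*N)]
    exact out_eval N L hN x y
  constructor
  · -- approximation bound
    intro x y hx hy
    obtain ⟨hx0, hx1⟩ := hx; obtain ⟨hy0, hy1⟩ := hy
    rw [show (fun z => g z 0) ![x,y] = g ![x,y] 0 from rfl, key x y hx0 hx1 hy0 hy1]
    have hu := Useq_bounds (2*N) (by omega) (even_two_mul N) ((x+y)/2)
      (by linarith) (by linarith) (L+1)
    have hxx := Useq_bounds (2*N) (by omega) (even_two_mul N) x hx0 hx1 (L+1)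
    have hyy := Useq_bounds (2*N) (by omega) (even_two_mul N) y hy0 hy1 (L+1)
    set ε : ℝ := (((2*N:ℕ):ℝ)⁻¹)^(2*(L+1)) with hε
    have hεpos : 0 ≤ ε := by positivity
    have hεbound : ε ≤ ((N:ℝ)^L)⁻¹ := by
      have hNpos : (0:ℝ) < (N:ℝ) := by exact_mod_cast hN
      have h1 : (0:ℝ) < (N:ℝ)^L := by positivity
      have h2 : (N:ℝ)^L ≤ ((2*N:ℕ):ℝ)^(2*(L+1)) := by
        calc (N:ℝ)^L ≤ ((2*N:ℕ):ℝ)^L := by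
              apply pow_le_pow_left₀ hNpos.le
              push_cast; linarith
        _ ≤ ((2*N:ℕ):ℝ)^(2*(L+1)) := by
              apply pow_le_pow_right₀
              · push_cast
                have : (1:ℝ) ≤ (N:ℝ) := by exact_mod_cast hN
                linarith
              · omega
      rw [hε, inv_pow]
      exact inv_anti₀ h1 h2
    have hxyid : x*y = 2*((x+y)/2)^2 - x^2/2 - y^2/2 := by ring
    have hbound : |2 * Useq (2*N) ((x+y)/2) (L+1)
        - Useq (2*N) x (L+1)/2 - Useq (2*N) y (L+1)/2 - x*y| ≤ (3/4)*ε := by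
      rw [hxyid, abs_le]
      constructor
      · nlinarith [hu.1, hu.2.2, hxx.1, hxx.2.2, hyy.1, hyy.2.2]
      · nlinarith [hu.1, hu.2.2, hxx.1, hxx.2.2, hyy.1, hyy.2.2]
    have h12 : (0:ℝ) ≤ ((N:ℝ)^L)⁻¹ := by positivity
    calc |2 * Useq (2*N) ((x+y)/2) (L+1)
        - Useq (2*N) x (L+1)/2 - Useq (2*N) y (L+1)/2 - x*y| ≤ (3/4)*ε := hbound
    _ ≤ ε := by linarith
    _ ≤ ((N:ℝ)^L)⁻¹ := hεbound
    _ ≤ 12 * ((N:ℝ)^L)⁻¹ := by linarith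
  · -- boundedness
    intro x y hx hy
    obtain ⟨hx0, hx1⟩ := hx; obtain ⟨hy0, hy1⟩ := hy
    rw [show (fun z => g z 0) ![x,y] = g ![x,y] 0 from rfl, key x y hx0 hx1 hy0 hy1]
    have hu := Useq_bounds (2*N) (by omega) (even_two_mul N) ((x+y)/2)
      (by linarith) (by linarith) (L+1)
    have hxx := Useq_bounds (2*N) (by omega) (even_two_mul N) x hx0 hx1 (L+1)
    have hyy := Useq_bounds (2*N) (by omega) (even_two_mul N) y hy0 hy1 (L+1)
    rw [abs_le]
    constructor
    · nlinarith [hu.1, hxx.2.1, hyy.2.1, sq_nonneg (x+y-1)]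
    · nlinarith [hu.2.1, hxx.1, hyy.1, sq_nonneg (x-1), sq_nonneg (y-1)]
end

section
/- For any positive integers N, L and d with d ≥ 2, there exists a fully connected ReLU network φ×^d ∈ F_{d,1}((L+1)(d−1)+d−2, 9N+d−2) such that (1) |φ×^d(z) − ∏ᵢ₌₁^d zᵢ| ≤ 12(d−1)N^{−L} for all z = (z₁,…,z_d) ∈ [0,1]^d, and (2) |φ×^d(z)| ≤ 1 for all z ∈ [0,1]^d. -/
open Finset

lemma hiddenIter_congr {W : ℕ} {A A' : ℕ → Matrix (Fin W) (Fin W) ℝ}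
    {v v' : ℕ → Fin W → ℝ} {x0 x0' : Fin W → ℝ} (k : ℕ)
    (hA : ∀ i < k, A i = A' i) (hv : ∀ i, 1 ≤ i → i ≤ k → v i = v' i) (hx : x0 = x0') :
    hiddenIter W A v x0 k = hiddenIter W A' v' x0' k := by
  induction k with
  | zero => simpa [hiddenIter]
  | succ n ih =>
    have h1 : hiddenIter W A v x0 n = hiddenIter W A' v' x0' n :=
      ih (fun i hi => hA i (hi.trans (Nat.lt_succ_self n)))
        (fun i h1 h2 => hv i h1 (h2.trans (Nat.le_succ n)))
    simp only [hiddenIter, h1, hA n (Nat.lt_succ_self n),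
      hv (n+1) (Nat.le_add_left 1 n) le_rfl]

lemma hiddenIter_shift {W : ℕ} {A : ℕ → Matrix (Fin W) (Fin W) ℝ}
    {v : ℕ → Fin W → ℝ} {x0 : Fin W → ℝ} (a b : ℕ) :
    hiddenIter W A v x0 (a + b)
      = hiddenIter W (fun n => A (a + n)) (fun n => v (a + n)) (hiddenIter W A v x0 a) b := by
  induction b with
  | zero => rfl
  | succ n ih =>
    have : a + (n + 1) = (a + n) + 1 := by omega
    rw [this]
    simp only [hiddenIter, ih]
    rfl

lemma hiddenIter_nonneg {W : ℕ} {A : ℕ → Matrix (Fin W) (Fin W) ℝ}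
    {v : ℕ → Fin W → ℝ} {x0 : Fin W → ℝ} (h : ∀ i, 0 ≤ x0 i) (k : ℕ) (i : Fin W) :
    0 ≤ hiddenIter W A v x0 k i := by
  cases k with
  | zero => exact h i
  | succ n => exact le_max_right _ _

lemma NNclass_congrFun {d q L W : ℕ} {f f' : (Fin d → ℝ) → Fin q → ℝ}
    (hf : f ∈ NNclass d q L W) (h : ∀ z, f z = f' z) : f' ∈ NNclass d q L W := by
  obtain ⟨A₁, A, v, Ao, vo, he⟩ := hf
  exact ⟨A₁, A, v, Ao, vo, fun z => (h z) ▸ he z⟩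

lemma oneLayer_mem {d q W : ℕ} (A₁ : Matrix (Fin W) (Fin d) ℝ) (v0 : Fin W → ℝ)
    (Aout : Matrix (Fin q) (Fin W) ℝ) (vout : Fin q → ℝ) :
    (fun z => vout + Aout.mulVec (fun i => max ((A₁.mulVec z) i - v0 i) 0))
      ∈ NNclass d q 1 W :=
  ⟨A₁, fun _ => 0, fun _ => v0, Aout, vout, fun z => by simp [hiddenIter]⟩

lemma comp_mem {d q p W L₁ L₂ : ℕ} {f : (Fin d → ℝ) → Fin q → ℝ}
    {g : (Fin q → ℝ) → Fin p → ℝ} (hL₁ : 1 ≤ L₁) (hL₂ : 1 ≤ L₂)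
    (hf : f ∈ NNclass d q L₁ W) (hg : g ∈ NNclass q p L₂ W) :
    (fun z => g (f z)) ∈ NNclass d p (L₁ + L₂) W := by
  obtain ⟨M, rfl⟩ : ∃ M, L₁ = M + 1 := ⟨L₁ - 1, by omega⟩
  obtain ⟨K, rfl⟩ : ∃ K, L₂ = K + 1 := ⟨L₂ - 1, by omega⟩
  obtain ⟨B₁, B, w, Bo, wo, hfe⟩ := hf
  obtain ⟨C₁, C, u, Co, uo, hge⟩ := hg
  refine ⟨B₁,
    (fun n => if n < M then B n else if n = M then C₁ * Bo else C (n - (M+1))),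
    (fun n => if n ≤ M then w n else if n = M + 1 then u 0 - C₁.mulVec wo else u (n - (M+1))),
    Co, uo, fun z => ?_⟩
  set A' : ℕ → Matrix (Fin W) (Fin W) ℝ :=
    fun n => if n < M then B n else if n = M then C₁ * Bo else C (n - (M+1)) with hA'
  set v' : ℕ → Fin W → ℝ :=
    fun n => if n ≤ M then w n else if n = M + 1 then u 0 - C₁.mulVec wo else u (n - (M+1)) with hv'
  have hv0 : v' 0 = w 0 := by simp [hv']
  set x0 : Fin W → ℝ := fun i => max ((B₁.mulVec z) i - w 0 i) 0 with hx0
  have hx0' : (fun i => max ((B₁.mulVec z) i - v' 0 i) 0) = x0 := by rw [hv0]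
  have hdep : (M + 1) + (K + 1) - 1 = (M + 1) + K := by omega
  rw [hx0', hdep, hiddenIter_shift (M+1) K]
  have hbase : hiddenIter W A' v' x0 M = hiddenIter W B w x0 M :=
    hiddenIter_congr M (fun i hi => by simp [hA', hi])
      (fun i h1 h2 => by simp [hv', h2]) rfl
  set y : Fin W → ℝ := hiddenIter W B w x0 M with hy
  have hstep : hiddenIter W A' v' x0 (M + 1)
      = fun i => max ((C₁.mulVec (f z)) i - u 0 i) 0 := by
    funext i
    show max (((A' M).mulVec (hiddenIter W A' v' x0 M)) i - v' (M+1) i) 0 = _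
    rw [hbase]
    have h1 : A' M = C₁ * Bo := by simp [hA']
    have h2 : v' (M+1) = u 0 - C₁.mulVec wo := by simp [hv']
    have hfz : f z = wo + Bo.mulVec y := by rw [hfe z]; rfl
    have hmv : C₁.mulVec (wo + Bo.mulVec y) = C₁.mulVec wo + (C₁ * Bo).mulVec y := by
      rw [Matrix.mulVec_add, Matrix.mulVec_mulVec]
    rw [h1, h2, hfz, hmv]
    simp only [Pi.add_apply, Pi.sub_apply]
    ring_nf
  rw [hstep]
  have htail : hiddenIter W (fun n => A' ((M+1) + n)) (fun n => v' ((M+1) + n))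
        (fun i => max ((C₁.mulVec (f z)) i - u 0 i) 0) K
      = hiddenIter W C u (fun i => max ((C₁.mulVec (f z)) i - u 0 i) 0) K := by
    refine hiddenIter_congr K (fun i hi => ?_) (fun i h1 h2 => ?_) rfl
    · simp only [hA']
      have h1 : ¬ (M + 1 + i < M) := by omega
      have h2 : ¬ (M + 1 + i = M) := by omega
      have h3 : M + 1 + i - (M+1) = i := by omega
      simp [h1, h2, h3]
    · simp only [hv']
      have ha : ¬ (M + 1 + i ≤ M) := by omega
      have hb : ¬ (M + 1 + i = M + 1) := by omega
      have h3 : M + 1 + i - (M+1) = i := by omega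
      simp [ha, hb, h3, show i ≠ 0 by omega]
  rw [htail]
  have := hge (f z)
  simpa using this

lemma mem_depth_succ {d q L W : ℕ} {f : (Fin d → ℝ) → Fin q → ℝ} (hL : 1 ≤ L)
    (hf : f ∈ NNclass d q L W) : f ∈ NNclass d q (L + 1) W := by
  obtain ⟨M, rfl⟩ : ∃ M, L = M + 1 := ⟨L - 1, by omega⟩
  obtain ⟨A₁, A, v, Ao, vo, he⟩ := hf
  refine ⟨A₁, (fun n => if n = M then 1 else A n),
    (fun n => if n = M + 1 then 0 else v n), Ao, vo, fun z => ?_⟩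
  set A' : ℕ → Matrix (Fin W) (Fin W) ℝ := fun n => if n = M then 1 else A n with hA'
  set v' : ℕ → Fin W → ℝ := fun n => if n = M + 1 then 0 else v n with hv'
  have hv0 : v' 0 = v 0 := by simp [hv']
  set x0 : Fin W → ℝ := fun i => max ((A₁.mulVec z) i - v 0 i) 0 with hx0
  have hx0' : (fun i => max ((A₁.mulVec z) i - v' 0 i) 0) = x0 := by rw [hv0]
  rw [hx0']
  have hbase : hiddenIter W A' v' x0 M = hiddenIter W A v x0 M :=
    hiddenIter_congr M (fun i hi => by simp [hA', Nat.ne_of_lt hi])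
      (fun i h1 h2 => by simp [hv', show i ≠ M + 1 by omega]) rfl
  have hnn : ∀ i, 0 ≤ x0 i := fun i => le_max_right _ _
  have hstep : hiddenIter W A' v' x0 (M + 1) = hiddenIter W A v x0 M := by
    funext i
    show max (((A' M).mulVec (hiddenIter W A' v' x0 M)) i - v' (M+1) i) 0 = _
    rw [hbase]
    have h1 : A' M = 1 := by simp [hA']
    have h2 : v' (M+1) = 0 := by simp [hv']
    rw [h1, h2, Matrix.one_mulVec]
    simp [max_eq_left, hiddenIter_nonneg hnn M i]
  rw [show M + 1 + 1 - 1 = M + 1 from rfl, hstep, he z]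
  rfl

lemma mem_depth_mono {d q L L' W : ℕ} {f : (Fin d → ℝ) → Fin q → ℝ} (hL : 1 ≤ L)
    (hLL : L ≤ L') (hf : f ∈ NNclass d q L W) : f ∈ NNclass d q L' W := by
  induction L' with
  | zero => omega
  | succ n ih =>
    rcases Nat.lt_or_ge L (n+1) with h | h
    · exact mem_depth_succ (by omega) (ih (by omega))
    · have : L = n + 1 := by omega
      exact this ▸ hf

lemma sum_dite_lt {W W' : ℕ} (h : W ≤ W') (f : Fin W → ℝ) :
    (∑ j : Fin W', (if hj : (j : ℕ) < W then f ⟨j, hj⟩ else 0)) = ∑ j : Fin W, f j := by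
  rw [Fin.sum_univ_eq_sum_range (fun m => if hm : m < W then f ⟨m, hm⟩ else 0) W',
    show (∑ j : Fin W, f j) = ∑ j : Fin W, (fun m => if hm : m < W then f ⟨m, hm⟩ else 0) (j : ℕ)
      by apply Finset.sum_congr rfl; intro j _; simp,
    Fin.sum_univ_eq_sum_range (fun m => if hm : m < W then f ⟨m, hm⟩ else 0) W]
  symm
  apply Finset.sum_subset (Finset.range_subset_range.mpr h)
  intro m _ hm
  simp at hm
  simp [hm]

lemma mem_width_mono {d q L W W' : ℕ} {f : (Fin d → ℝ) → Fin q → ℝ} (h : W ≤ W')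
    (hf : f ∈ NNclass d q L W) : f ∈ NNclass d q L W' := by
  obtain ⟨A₁, A, v, Ao, vo, he⟩ := hf
  refine ⟨(fun i j => if hi : (i : ℕ) < W then A₁ ⟨i, hi⟩ j else 0),
    (fun n i j => if hi : (i : ℕ) < W then (if hj : (j : ℕ) < W then A n ⟨i, hi⟩ ⟨j, hj⟩ else 0) else 0),
    (fun n i => if hi : (i : ℕ) < W then v n ⟨i, hi⟩ else 0),
    (fun o j => if hj : (j : ℕ) < W then Ao o ⟨j, hj⟩ else 0), vo, fun z => ?_⟩
  set A₁' : Matrix (Fin W') (Fin d) ℝ := fun i j => if hi : (i : ℕ) < W then A₁ ⟨i, hi⟩ j else 0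
  set A' : ℕ → Matrix (Fin W') (Fin W') ℝ :=
    fun n i j => if hi : (i : ℕ) < W then (if hj : (j : ℕ) < W then A n ⟨i, hi⟩ ⟨j, hj⟩ else 0) else 0
  set v' : ℕ → Fin W' → ℝ := fun n i => if hi : (i : ℕ) < W then v n ⟨i, hi⟩ else 0
  set x0 : Fin W → ℝ := fun i => max ((A₁.mulVec z) i - v 0 i) 0 with hx0
  set x0' : Fin W' → ℝ := fun i => max ((A₁'.mulVec z) i - v' 0 i) 0 with hx0'
  have hx : ∀ i : Fin W', x0' i = if hi : (i : ℕ) < W then x0 ⟨i, hi⟩ else 0 := by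
    intro i
    by_cases hi : (i : ℕ) < W
    · have h1 : (A₁'.mulVec z) i = (A₁.mulVec z) ⟨i, hi⟩ := by
        simp only [Matrix.mulVec, dotProduct]
        exact Finset.sum_congr rfl (fun j _ => by simp [A₁', hi])
      have h2 : v' 0 i = v 0 ⟨i, hi⟩ := by simp [v', hi]
      simp only [hx0', hx0, hi, dif_pos, h1, h2]
    · have h1 : (A₁'.mulVec z) i = 0 := by
        simp only [Matrix.mulVec, dotProduct]
        exact Finset.sum_eq_zero (fun j _ => by simp [A₁', hi])
      have h2 : v' 0 i = 0 := by simp [v', hi]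
      simp [hx0', h1, h2, hi]
  have key : ∀ k, ∀ i : Fin W', hiddenIter W' A' v' x0' k i
      = if hi : (i : ℕ) < W then hiddenIter W A v x0 k ⟨i, hi⟩ else 0 := by
    intro k
    induction k with
    | zero => exact hx
    | succ n ih =>
      intro i
      show max (((A' n).mulVec (hiddenIter W' A' v' x0' n)) i - v' (n+1) i) 0 = _
      by_cases hi : (i : ℕ) < W
      · have hmv : ((A' n).mulVec (hiddenIter W' A' v' x0' n)) i
            = ((A n).mulVec (hiddenIter W A v x0 n)) ⟨i, hi⟩ := by
          simp only [Matrix.mulVec, dotProduct]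
          rw [show (∑ j : Fin W', A' n i j * hiddenIter W' A' v' x0' n j)
              = ∑ j : Fin W', (if hj : (j : ℕ) < W then
                  A n ⟨i, hi⟩ ⟨j, hj⟩ * hiddenIter W A v x0 n ⟨j, hj⟩ else 0) from
            Finset.sum_congr rfl (fun j _ => by
              by_cases hj : (j : ℕ) < W
              · simp [A', hi, hj, ih j]
              · simp [A', hi, hj, ih j])]
          exact sum_dite_lt h (fun j => A n ⟨i, hi⟩ j * hiddenIter W A v x0 n j)
        have hv : v' (n+1) i = v (n+1) ⟨i, hi⟩ := by simp [v', hi]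
        simp only [hi, dif_pos, hmv, hv]
        rfl
      · have hmv : ((A' n).mulVec (hiddenIter W' A' v' x0' n)) i = 0 := by
          simp only [Matrix.mulVec, dotProduct]
          exact Finset.sum_eq_zero (fun j _ => by simp [A', hi])
        have hv : v' (n+1) i = 0 := by simp [v', hi]
        simp [hmv, hv, hi]
  rw [he z, ← hx0]
  funext o
  simp only [Pi.add_apply]
  congr 1
  simp only [Matrix.mulVec, dotProduct]
  symm
  rw [show (∑ j : Fin W', (if hj : (j : ℕ) < W then Ao o ⟨j, hj⟩ else 0)
        * hiddenIter W' A' v' x0' (L-1) j)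
      = ∑ j : Fin W', (if hj : (j : ℕ) < W then
          Ao o ⟨j, hj⟩ * hiddenIter W A v x0 (L-1) ⟨j, hj⟩ else 0) from
    Finset.sum_congr rfl (fun j _ => by
      by_cases hj : (j : ℕ) < W
      · simp [key, hj]
      · simp [key, hj])]
  exact sum_dite_lt h (fun j => Ao o j * hiddenIter W A v x0 (L-1) j)

lemma mem_pre_affine {d d' q L W : ℕ} {f : (Fin d → ℝ) → Fin q → ℝ}
    (hf : f ∈ NNclass d q L W) (M : Matrix (Fin d) (Fin d') ℝ) (b : Fin d → ℝ) :
    (fun z => f (M.mulVec z + b)) ∈ NNclass d' q L W := by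
  obtain ⟨A₁, A, v, Ao, vo, he⟩ := hf
  refine ⟨A₁ * M, A, (fun n => if n = 0 then v 0 - A₁.mulVec b else v n), Ao, vo, fun z => ?_⟩
  show f (M.mulVec z + b) = _
  rw [he (M.mulVec z + b)]
  congr 1
  refine congrArg Ao.mulVec ?_
  refine hiddenIter_congr _ (fun i _ => rfl)
    (fun i hi _ => (if_neg (Nat.one_le_iff_ne_zero.mp hi) : _ = v i).symm) ?_
  funext i
  show _ = ((A₁ * M).mulVec z i - (if (0:ℕ) = 0 then v 0 - A₁.mulVec b else v 0) i) ⊔ 0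
  rw [if_pos rfl]
  simp only [Matrix.mulVec_add, ← Matrix.mulVec_mulVec, Pi.sub_apply, Pi.add_apply]
  ring_nf

lemma mem_post_affine {d q p L W : ℕ} {f : (Fin d → ℝ) → Fin q → ℝ}
    (hf : f ∈ NNclass d q L W) (C : Matrix (Fin p) (Fin q) ℝ) (c : Fin p → ℝ) :
    (fun z => c + C.mulVec (f z)) ∈ NNclass d p L W := by
  obtain ⟨A₁, A, v, Ao, vo, he⟩ := hf
  refine ⟨A₁, A, v, C * Ao, c + C.mulVec vo, fun z => ?_⟩
  show c + C.mulVec (f z) = _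
  rw [he z]
  rw [Matrix.mulVec_add, ← Matrix.mulVec_mulVec]
  abel

lemma mem_parallel {d q₁ q₂ L W₁ W₂ : ℕ} {f : (Fin d → ℝ) → Fin q₁ → ℝ}
    {g : (Fin d → ℝ) → Fin q₂ → ℝ}
    (hf : f ∈ NNclass d q₁ L W₁) (hg : g ∈ NNclass d q₂ L W₂) :
    (fun z => Fin.append (f z) (g z)) ∈ NNclass d (q₁ + q₂) L (W₁ + W₂) := by
  obtain ⟨B₁, B, w, Bo, wo, hfe⟩ := hf
  obtain ⟨C₁, C, u, Co, uo, hge⟩ := hg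
  refine ⟨(fun i j => Fin.addCases (fun i₁ => B₁ i₁ j) (fun i₂ => C₁ i₂ j) i),
    (fun n i j => Fin.addCases
      (fun i₁ => Fin.addCases (fun j₁ => B n i₁ j₁) (fun _ => 0) j)
      (fun i₂ => Fin.addCases (fun _ => 0) (fun j₂ => C n i₂ j₂) j) i),
    (fun n => Fin.append (w n) (u n)),
    (fun o j => Fin.addCases
      (fun o₁ => Fin.addCases (fun j₁ => Bo o₁ j₁) (fun _ => 0) j)
      (fun o₂ => Fin.addCases (fun _ => 0) (fun j₂ => Co o₂ j₂) j) o),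
    Fin.append wo uo, fun z => ?_⟩
  set A₁' : Matrix (Fin (W₁ + W₂)) (Fin d) ℝ :=
    fun i j => Fin.addCases (fun i₁ => B₁ i₁ j) (fun i₂ => C₁ i₂ j) i with hA₁'
  set A' : ℕ → Matrix (Fin (W₁ + W₂)) (Fin (W₁ + W₂)) ℝ :=
    fun n i j => Fin.addCases
      (fun i₁ => Fin.addCases (fun j₁ => B n i₁ j₁) (fun _ => 0) j)
      (fun i₂ => Fin.addCases (fun _ => 0) (fun j₂ => C n i₂ j₂) j) i with hA'
  set v' : ℕ → Fin (W₁ + W₂) → ℝ := fun n => Fin.append (w n) (u n) with hv'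
  set xf : Fin W₁ → ℝ := fun i => max ((B₁.mulVec z) i - w 0 i) 0 with hxf
  set xg : Fin W₂ → ℝ := fun i => max ((C₁.mulVec z) i - u 0 i) 0 with hxg
  set x0' : Fin (W₁ + W₂) → ℝ := fun i => max ((A₁'.mulVec z) i - v' 0 i) 0 with hx0'
  have hx : x0' = Fin.append xf xg := by
    funext i
    induction i using Fin.addCases with
    | left i₁ =>
      have h1 : (A₁'.mulVec z) (Fin.castAdd W₂ i₁) = (B₁.mulVec z) i₁ := by
        simp only [Matrix.mulVec, dotProduct]
        exact Finset.sum_congr rfl (fun j _ => by simp [hA₁'])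
      simp [hx0', h1, hv', Fin.append_left, hxf]
    | right i₂ =>
      have h1 : (A₁'.mulVec z) (Fin.natAdd W₁ i₂) = (C₁.mulVec z) i₂ := by
        simp only [Matrix.mulVec, dotProduct]
        exact Finset.sum_congr rfl (fun j _ => by simp [hA₁'])
      simp [hx0', h1, hv', Fin.append_right, hxg]
  have key : ∀ k, hiddenIter (W₁ + W₂) A' v' x0' k
      = Fin.append (hiddenIter W₁ B w xf k) (hiddenIter W₂ C u xg k) := by
    intro k
    induction k with
    | zero => exact hx
    | succ n ih =>
      funext i
      show max (((A' n).mulVec (hiddenIter (W₁+W₂) A' v' x0' n)) i - v' (n+1) i) 0 = _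
      rw [ih]
      induction i using Fin.addCases with
      | left i₁ =>
        have h1 : ((A' n).mulVec (Fin.append (hiddenIter W₁ B w xf n) (hiddenIter W₂ C u xg n)))
            (Fin.castAdd W₂ i₁) = ((B n).mulVec (hiddenIter W₁ B w xf n)) i₁ := by
          simp only [Matrix.mulVec, dotProduct]
          rw [Fin.sum_univ_add]
          have e1 : ∀ j₁ : Fin W₁, A' n (Fin.castAdd W₂ i₁) (Fin.castAdd W₂ j₁)
              * Fin.append (hiddenIter W₁ B w xf n) (hiddenIter W₂ C u xg n) (Fin.castAdd W₂ j₁)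
              = B n i₁ j₁ * hiddenIter W₁ B w xf n j₁ := by
            intro j₁; simp [hA', Fin.append_left]
          have e2 : ∀ j₂ : Fin W₂, A' n (Fin.castAdd W₂ i₁) (Fin.natAdd W₁ j₂)
              * Fin.append (hiddenIter W₁ B w xf n) (hiddenIter W₂ C u xg n) (Fin.natAdd W₁ j₂)
              = 0 := by
            intro j₂; simp [hA']
          simp only [e1, e2, Finset.sum_const_zero, add_zero]
        rw [h1]
        simp [hv', Fin.append_left]
        rfl
      | right i₂ =>
        have h1 : ((A' n).mulVec (Fin.append (hiddenIter W₁ B w xf n) (hiddenIter W₂ C u xg n)))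
            (Fin.natAdd W₁ i₂) = ((C n).mulVec (hiddenIter W₂ C u xg n)) i₂ := by
          simp only [Matrix.mulVec, dotProduct]
          rw [Fin.sum_univ_add]
          have e1 : ∀ j₁ : Fin W₁, A' n (Fin.natAdd W₁ i₂) (Fin.castAdd W₂ j₁)
              * Fin.append (hiddenIter W₁ B w xf n) (hiddenIter W₂ C u xg n) (Fin.castAdd W₂ j₁)
              = 0 := by
            intro j₁; simp [hA']
          have e2 : ∀ j₂ : Fin W₂, A' n (Fin.natAdd W₁ i₂) (Fin.natAdd W₁ j₂)
              * Fin.append (hiddenIter W₁ B w xf n) (hiddenIter W₂ C u xg n) (Fin.natAdd W₁ j₂)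
              = C n i₂ j₂ * hiddenIter W₂ C u xg n j₂ := by
            intro j₂; simp [hA', Fin.append_right]
          simp only [e1, e2, Finset.sum_const_zero, zero_add]
        rw [h1]
        simp [hv', Fin.append_right]
        rfl
  show Fin.append (f z) (g z) = _
  rw [key (L - 1), hfe z, hge z]
  funext o
  induction o using Fin.addCases with
  | left o₁ =>
    have h1 : (Matrix.mulVec (fun o j => Fin.addCases
        (fun o₁ => Fin.addCases (fun j₁ => Bo o₁ j₁) (fun _ => 0) j)
        (fun o₂ => Fin.addCases (fun _ => 0) (fun j₂ => Co o₂ j₂) j) o)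
        (Fin.append (hiddenIter W₁ B w xf (L-1)) (hiddenIter W₂ C u xg (L-1))))
        (Fin.castAdd q₂ o₁) = (Bo.mulVec (hiddenIter W₁ B w xf (L-1))) o₁ := by
      simp only [Matrix.mulVec, dotProduct]
      rw [Fin.sum_univ_add]
      simp [Fin.append_left, Fin.append_right]
    simp only [Pi.add_apply, Fin.append_left, h1]
    rfl
  | right o₂ =>
    have h1 : (Matrix.mulVec (fun o j => Fin.addCases
        (fun o₁ => Fin.addCases (fun j₁ => Bo o₁ j₁) (fun _ => 0) j)
        (fun o₂ => Fin.addCases (fun _ => 0) (fun j₂ => Co o₂ j₂) j) o)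
        (Fin.append (hiddenIter W₁ B w xf (L-1)) (hiddenIter W₂ C u xg (L-1))))
        (Fin.natAdd q₁ o₂) = (Co.mulVec (hiddenIter W₂ C u xg (L-1))) o₂ := by
      simp only [Matrix.mulVec, dotProduct]
      rw [Fin.sum_univ_add]
      simp [Fin.append_left, Fin.append_right]
    simp only [Pi.add_apply, Fin.append_right, h1]
    rfl

lemma mem_congr_q {d q q' L W : ℕ} (h : q = q') {f : (Fin d → ℝ) → Fin q → ℝ}
    (hf : f ∈ NNclass d q L W) {f' : (Fin d → ℝ) → Fin q' → ℝ}
    (he : ∀ z i, f' z i = f z (Fin.cast h.symm i)) : f' ∈ NNclass d q' L W := by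
  subst h
  refine NNclass_congrFun hf (fun z => funext fun i => ?_)
  rw [he z i]
  rfl

lemma mem_congr_d {d d' q L W : ℕ} (h : d = d') {f : (Fin d → ℝ) → Fin q → ℝ}
    (hf : f ∈ NNclass d q L W) :
    (fun z : Fin d' → ℝ => f (fun i => z (Fin.cast h i))) ∈ NNclass d' q L W := by
  subst h
  refine NNclass_congrFun hf (fun z => ?_)
  rfl

lemma reluId_mem (r L : ℕ) (hL : 1 ≤ L) :
    (fun z : Fin r → ℝ => fun i => max (z i) 0) ∈ NNclass r r L r := by
  induction L with
  | zero => omega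
  | succ n ih =>
    rcases Nat.lt_or_ge 0 n with h | h
    · exact mem_depth_succ h (ih h)
    · have hn : n = 0 := by omega
      subst hn
      refine NNclass_congrFun (oneLayer_mem (1 : Matrix (Fin r) (Fin r) ℝ) 0 1 0) ?_
      intro z
      funext i
      simp [Matrix.one_mulVec]

noncomputable def tc (N j : ℕ) : ℝ := if j = 0 then N else (-1)^j * (2*N)
noncomputable def dc (N : ℕ) (j : ℕ) : ℝ := if j = 0 then 1 - 1/N else -(2/N)
noncomputable def Tcomb (N : ℕ) (s : ℝ) : ℝ := ∑ j ∈ range N, tc N j * max (s - j/N) 0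
noncomputable def Dcomb (N : ℕ) (s : ℝ) : ℝ := ∑ j ∈ range N, dc N j * max (s - j/N) 0

lemma tc_partial {N : ℕ} (hN : 0 < N) (s : ℝ) (j : ℕ) :
    ∑ i ∈ range (j+1), tc N i * (s - i/N)
      = if Even j then (N:ℝ)*s - j else ((j:ℝ)+1) - N*s := by
  induction j with
  | zero => simp [tc]
  | succ n ih =>
    rw [Finset.sum_range_succ, ih]
    rcases Nat.even_or_odd n with h | h
    · have h1 : ¬ Even (n+1) := by simp [Nat.even_add_one, h]
      have h2 : tc N (n+1) = -(2*N) := by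
        simp [tc, pow_succ, Even.neg_one_pow h]
      rw [if_pos h, if_neg h1, h2]
      have hNne : (N:ℝ) ≠ 0 := by positivity
      push_cast
      field_simp
      ring
    · have h1 : Even (n+1) := Odd.add_one h
      have h2 : tc N (n+1) = 2*N := by
        simp [tc, pow_succ, Odd.neg_one_pow h]
      rw [if_neg (Nat.not_even_iff_odd.mpr h), if_pos h1, h2]
      have hNne : (N:ℝ) ≠ 0 := by positivity
      push_cast
      field_simp
      ring

lemma dc_partial (N : ℕ) (s : ℝ) (j : ℕ) :
    ∑ i ∈ range (j+1), dc N i * (s - i/N)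
      = s * (1 - (2*(j:ℝ)+1)/N) + (j:ℝ)*((j:ℝ)+1)/(N:ℝ)^2 := by
  induction j with
  | zero => simp [dc]; ring
  | succ n ih =>
    rw [Finset.sum_range_succ, ih]
    have h2 : dc N (n+1) = -(2/N) := by simp [dc]
    rw [h2]
    push_cast
    by_cases hN : (N:ℝ) = 0
    · simp [hN]
    · field_simp
      ring

lemma exists_bracket {N : ℕ} (hN : 0 < N) {s : ℝ} (hs : s ∈ Set.Icc (0:ℝ) 1) :
    ∃ j : ℕ, j < N ∧ (j:ℝ)/N ≤ s ∧ s ≤ ((j:ℝ)+1)/N := by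
  obtain ⟨hs0, hs1⟩ := hs
  have hNR : (0:ℝ) < N := by exact_mod_cast hN
  refine ⟨min ⌊(N:ℝ)*s⌋₊ (N-1), by omega, ?_, ?_⟩
  · rw [div_le_iff₀ hNR]
    have hfl : (⌊(N:ℝ)*s⌋₊ : ℝ) ≤ (N:ℝ)*s := Nat.floor_le (by positivity)
    have hmin : ((min ⌊(N:ℝ)*s⌋₊ (N-1) : ℕ) : ℝ) ≤ (⌊(N:ℝ)*s⌋₊ : ℝ) := by
      exact_mod_cast Nat.min_le_left _ _
    linarith [mul_comm s (N:ℝ) ▸ hfl]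
  · rw [le_div_iff₀ hNR]
    rcases le_total (⌊(N:ℝ)*s⌋₊) (N-1) with h | h
    · rw [min_eq_left h]
      have := Nat.lt_floor_add_one ((N:ℝ)*s)
      nlinarith
    · rw [min_eq_right h]
      have h3 : ((N-1 : ℕ):ℝ) + 1 = (N:ℝ) := by
        have : (1:ℕ) ≤ N := hN
        push_cast [Nat.cast_sub this]
        ring
      rw [h3]
      nlinarith

lemma Tcomb_eval {N : ℕ} (hN : 0 < N) {s : ℝ} {j : ℕ} (hj : j < N)
    (h1 : (j:ℝ)/N ≤ s) (h2 : s ≤ ((j:ℝ)+1)/N) :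
    Tcomb N s = if Even j then (N:ℝ)*s - j else ((j:ℝ)+1) - N*s := by
  have hNR : (0:ℝ) < N := by exact_mod_cast hN
  rw [Tcomb, ← Finset.sum_range_add_sum_Ico _ (Nat.succ_le_of_lt hj)]
  have hzero : ∑ i ∈ Ico (j+1) N, tc N i * max (s - i/N) 0 = 0 := by
    apply Finset.sum_eq_zero
    intro i hi
    obtain ⟨hi1, _⟩ := Finset.mem_Ico.mp hi
    have hji : ((j:ℝ)+1) ≤ (i:ℝ) := by exact_mod_cast hi1
    have hii : ((j:ℝ)+1)/N ≤ (i:ℝ)/N := (div_le_div_iff_of_pos_right hNR).mpr hji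
    have : s - i/N ≤ 0 := by linarith
    simp [max_eq_right this]
  rw [hzero, add_zero]
  have hmain : ∑ i ∈ range (j+1), tc N i * max (s - i/N) 0
      = ∑ i ∈ range (j+1), tc N i * (s - i/N) := by
    apply Finset.sum_congr rfl
    intro i hi
    have hi' : (i:ℝ) ≤ (j:ℝ) := by
      exact_mod_cast Nat.lt_succ_iff.mp (Finset.mem_range.mp hi)
    have hii : (i:ℝ)/N ≤ (j:ℝ)/N := (div_le_div_iff_of_pos_right hNR).mpr hi'
    have : 0 ≤ s - i/N := by linarith
    rw [max_eq_left this]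
  rw [hmain, tc_partial hN]

lemma Dcomb_eval {N : ℕ} (hN : 0 < N) {s : ℝ} {j : ℕ} (hj : j < N)
    (h1 : (j:ℝ)/N ≤ s) (h2 : s ≤ ((j:ℝ)+1)/N) :
    Dcomb N s = s * (1 - (2*(j:ℝ)+1)/N) + (j:ℝ)*((j:ℝ)+1)/(N:ℝ)^2 := by
  have hNR : (0:ℝ) < N := by exact_mod_cast hN
  rw [Dcomb, ← Finset.sum_range_add_sum_Ico _ (Nat.succ_le_of_lt hj)]
  have hzero : ∑ i ∈ Ico (j+1) N, dc N i * max (s - i/N) 0 = 0 := by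
    apply Finset.sum_eq_zero
    intro i hi
    obtain ⟨hi1, _⟩ := Finset.mem_Ico.mp hi
    have hji : ((j:ℝ)+1) ≤ (i:ℝ) := by exact_mod_cast hi1
    have hii : ((j:ℝ)+1)/N ≤ (i:ℝ)/N := (div_le_div_iff_of_pos_right hNR).mpr hji
    have : s - i/N ≤ 0 := by linarith
    simp [max_eq_right this]
  rw [hzero, add_zero]
  have hmain : ∑ i ∈ range (j+1), dc N i * max (s - i/N) 0
      = ∑ i ∈ range (j+1), dc N i * (s - i/N) := by
    apply Finset.sum_congr rfl
    intro i hi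
    have hi' : (i:ℝ) ≤ (j:ℝ) := by
      exact_mod_cast Nat.lt_succ_iff.mp (Finset.mem_range.mp hi)
    have hii : (i:ℝ)/N ≤ (j:ℝ)/N := (div_le_div_iff_of_pos_right hNR).mpr hi'
    have : 0 ≤ s - i/N := by linarith
    rw [max_eq_left this]
  rw [hmain, dc_partial]

lemma Tcomb_mem {N : ℕ} (hN : 0 < N) {s : ℝ} (hs : s ∈ Set.Icc (0:ℝ) 1) :
    Tcomb N s ∈ Set.Icc (0:ℝ) 1 := by
  have hNR : (0:ℝ) < N := by exact_mod_cast hN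
  obtain ⟨j, hj, h1, h2⟩ := exists_bracket hN hs
  rw [Tcomb_eval hN hj h1 h2]
  rw [div_le_iff₀ hNR] at h1
  rw [le_div_iff₀ hNR] at h2
  split_ifs with h
  · constructor <;> nlinarith
  · constructor <;> nlinarith

lemma TD_identity {N : ℕ} (hN : 0 < N) {s : ℝ} (hs : s ∈ Set.Icc (0:ℝ) 1) :
    Dcomb N s = s * (1 - s) - Tcomb N s * (1 - Tcomb N s) / (N:ℝ)^2 := by
  have hNR : (0:ℝ) < N := by exact_mod_cast hN
  have hNne : (N:ℝ) ≠ 0 := ne_of_gt hNR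
  obtain ⟨j, hj, h1, h2⟩ := exists_bracket hN hs
  rw [Tcomb_eval hN hj h1 h2, Dcomb_eval hN hj h1 h2]
  split_ifs with h
  · field_simp
    ring
  · field_simp
    ring

noncomputable def titer (N : ℕ) : ℕ → ℝ → ℝ
  | 0 => fun t => t
  | (k+1) => fun t => Tcomb N (titer N k t)

noncomputable def Qf (N : ℕ) : ℕ → ℝ → ℝ
  | 0 => fun t => t
  | (k+1) => fun t => Qf N k t - Dcomb N (titer N k t) / (N:ℝ)^(2*k)

lemma titer_mem {N : ℕ} (hN : 0 < N) {t : ℝ} (ht : t ∈ Set.Icc (0:ℝ) 1) (k : ℕ) :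
    titer N k t ∈ Set.Icc (0:ℝ) 1 := by
  induction k with
  | zero => exact ht
  | succ n ih => exact Tcomb_mem hN ih

lemma Qf_eq {N : ℕ} (hN : 0 < N) {t : ℝ} (ht : t ∈ Set.Icc (0:ℝ) 1) (k : ℕ) :
    Qf N k t = t^2 + titer N k t * (1 - titer N k t) / (N:ℝ)^(2*k) := by
  have hNR : (0:ℝ) < N := by exact_mod_cast hN
  have hNne : (N:ℝ) ≠ 0 := ne_of_gt hNR
  induction k with
  | zero => simp [Qf, titer]; ring
  | succ n ih =>
    show Qf N n t - Dcomb N (titer N n t) / (N:ℝ)^(2*n) = _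
    rw [ih, TD_identity hN (titer_mem hN ht n)]
    show _ = t^2 + Tcomb N (titer N n t) * (1 - Tcomb N (titer N n t)) / (N:ℝ)^(2*(n+1))
    have hpow : (N:ℝ)^(2*(n+1)) = (N:ℝ)^(2*n) * (N:ℝ)^2 := by
      rw [← pow_add]; ring_nf
    rw [hpow]
    have hp : (N:ℝ)^(2*n) ≠ 0 := pow_ne_zero _ hNne
    field_simp
    ring

lemma Qf_err {N : ℕ} (hN : 0 < N) {t : ℝ} (ht : t ∈ Set.Icc (0:ℝ) 1) (k : ℕ) :
    0 ≤ Qf N k t - t^2 ∧ Qf N k t - t^2 ≤ ((N:ℝ)^(2*k))⁻¹ / 4 := by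
  have hNR : (0:ℝ) < N := by exact_mod_cast hN
  have hp : (0:ℝ) < (N:ℝ)^(2*k) := pow_pos hNR _
  obtain ⟨hu0, hu1⟩ := titer_mem hN ht k
  rw [Qf_eq hN ht k]
  constructor
  · have h1 : 0 ≤ titer N k t * (1 - titer N k t) := by nlinarith
    have := div_nonneg h1 hp.le
    linarith
  · have hx : titer N k t * (1 - titer N k t) ≤ 1/4 := by nlinarith [sq_nonneg (titer N k t - 1/2)]
    have hinv : (0:ℝ) ≤ ((N:ℝ)^(2*k))⁻¹ := by positivity
    have h2 : titer N k t * (1 - titer N k t) / (N:ℝ)^(2*k)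
        ≤ (1/4) * ((N:ℝ)^(2*k))⁻¹ := by
      rw [div_eq_mul_inv]
      exact mul_le_mul_of_nonneg_right hx hinv
    linarith

noncomputable def scaleN (N k : ℕ) : ℝ := ((N:ℝ)^(2*k))⁻¹

noncomputable def shv (N : ℕ) : Fin (N+1) → ℝ :=
  fun i => if (i:ℕ) < N then (i:ℕ)/N else 0

noncomputable def stepMat (N : ℕ) (c : ℝ) : Matrix (Fin (N+1)) (Fin (N+1)) ℝ :=
  fun i j => if (i:ℕ) < N then (if (j:ℕ) < N then tc N j else 0)
    else (if (j:ℕ) < N then -c * dc N j else 1)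

noncomputable def stepFn (N : ℕ) (c : ℝ) (x : Fin (N+1) → ℝ) : Fin (N+1) → ℝ :=
  fun i => max (((stepMat N c).mulVec x) i - shv N i) 0

noncomputable def chainState (N : ℕ) : ℕ → (Fin 1 → ℝ) → (Fin (N+1) → ℝ)
  | 0 => fun z i => max (z 0 - shv N i) 0
  | (m+1) => fun z => stepFn N (scaleN N m) (chainState N m z)

noncomputable def stv (N : ℕ) (k : ℕ) (t : ℝ) : Fin (N+1) → ℝ :=
  fun i => if (i:ℕ) < N then max (titer N k t - (i:ℕ)/N) 0 else Qf N k t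

lemma stepMat_mulVec_lt (N : ℕ) (c : ℝ) (x : Fin (N+1) → ℝ) {i : Fin (N+1)}
    (hi : (i:ℕ) < N) :
    ((stepMat N c).mulVec x) i = ∑ j : Fin N, tc N j * x j.castSucc := by
  simp only [Matrix.mulVec, dotProduct]
  rw [Fin.sum_univ_castSucc]
  have hlast : stepMat N c i (Fin.last N) * x (Fin.last N) = 0 := by
    simp [stepMat, hi]
  rw [hlast, add_zero]
  apply Finset.sum_congr rfl
  intro j _
  have hj : ((j.castSucc : Fin (N+1)) : ℕ) < N := by simp
  simp [stepMat, hi, hj]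

lemma stepMat_mulVec_last (N : ℕ) (c : ℝ) (x : Fin (N+1) → ℝ) :
    ((stepMat N c).mulVec x) (Fin.last N)
      = x (Fin.last N) - c * ∑ j : Fin N, dc N j * x j.castSucc := by
  simp only [Matrix.mulVec, dotProduct]
  rw [Fin.sum_univ_castSucc]
  have hNlt : ¬ ((Fin.last N : Fin (N+1)) : ℕ) < N := by simp
  have hlast : stepMat N c (Fin.last N) (Fin.last N) * x (Fin.last N) = x (Fin.last N) := by
    simp [stepMat]
  rw [hlast]
  have hmain : ∑ j : Fin N, stepMat N c (Fin.last N) j.castSucc * x j.castSucc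
      = ∑ j : Fin N, (-c * dc N j) * x j.castSucc := by
    apply Finset.sum_congr rfl
    intro j _
    have hj : ((j.castSucc : Fin (N+1)) : ℕ) < N := by simp
    simp [stepMat, hj]
  rw [hmain]
  have : ∑ j : Fin N, (-c * dc N j) * x j.castSucc
      = -(c * ∑ j : Fin N, dc N j * x j.castSucc) := by
    rw [Finset.mul_sum, ← Finset.sum_neg_distrib]
    exact Finset.sum_congr rfl (fun j _ => by ring)
  rw [this]
  ring

lemma sum_fin_tc (N : ℕ) (t : ℝ) :
    ∑ j : Fin N, tc N (j:ℕ) * max (t - ((j:ℕ):ℝ)/N) 0 = Tcomb N t :=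
  Fin.sum_univ_eq_sum_range (fun j => tc N j * max (t - (j:ℝ)/N) 0) N

lemma sum_fin_dc (N : ℕ) (t : ℝ) :
    ∑ j : Fin N, dc N (j:ℕ) * max (t - ((j:ℕ):ℝ)/N) 0 = Dcomb N t :=
  Fin.sum_univ_eq_sum_range (fun j => dc N j * max (t - (j:ℝ)/N) 0) N

lemma stv_step {N : ℕ} (hN : 0 < N) {t : ℝ} (ht : t ∈ Set.Icc (0:ℝ) 1) (k : ℕ) :
    stepFn N (scaleN N k) (stv N k t) = stv N (k+1) t := by
  have hT : ∑ j : Fin N, tc N (j:ℕ) * stv N k t j.castSucc = titer N (k+1) t := by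
    rw [show (titer N (k+1) t) = Tcomb N (titer N k t) from rfl, ← sum_fin_tc]
    apply Finset.sum_congr rfl
    intro j _
    have hj : ((j.castSucc : Fin (N+1)) : ℕ) < N := by simp
    simp [stv, hj]
  have hD : ∑ j : Fin N, dc N (j:ℕ) * stv N k t j.castSucc = Dcomb N (titer N k t) := by
    rw [← sum_fin_dc]
    apply Finset.sum_congr rfl
    intro j _
    have hj : ((j.castSucc : Fin (N+1)) : ℕ) < N := by simp
    simp [stv, hj]
  funext i
  rcases Nat.lt_or_ge (i : ℕ) N with hi | hi
  · show max (((stepMat N (scaleN N k)).mulVec (stv N k t)) i - shv N i) 0 = _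
    rw [stepMat_mulVec_lt N _ _ hi, hT]
    simp [stv, shv, hi]
  · have hieq : i = Fin.last N := by
      apply Fin.ext
      simp
      omega
    subst hieq
    show max (((stepMat N (scaleN N k)).mulVec (stv N k t)) (Fin.last N) - shv N (Fin.last N)) 0 = _
    rw [stepMat_mulVec_last, hD]
    have hlast : ¬ ((Fin.last N : Fin (N+1)) : ℕ) < N := by simp
    have hstv : stv N k t (Fin.last N) = Qf N k t := by simp [stv, hlast]
    have hQ : Qf N k t - scaleN N k * Dcomb N (titer N k t) = Qf N (k+1) t := by
      show _ = Qf N k t - Dcomb N (titer N k t) / (N:ℝ)^(2*k)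
      rw [scaleN, div_eq_mul_inv]
      ring
    have hQnn : 0 ≤ Qf N (k+1) t := by
      have h1 := (Qf_err hN ht (k+1)).1
      nlinarith [sq_nonneg t]
    rw [hstv]
    have hsh : shv N (Fin.last N) = 0 := by simp [shv]
    rw [hsh, sub_zero, hQ]
    have hstv' : stv N (k+1) t (Fin.last N) = Qf N (k+1) t := by simp [stv, hlast]
    rw [hstv']
    exact max_eq_left hQnn

lemma chainState_stv {N : ℕ} (hN : 0 < N) {t : ℝ} (ht : t ∈ Set.Icc (0:ℝ) 1) (m : ℕ) :
    chainState N m (fun _ => t) = stv N m t := by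
  induction m with
  | zero =>
    funext i
    show max (t - shv N i) 0 = stv N 0 t i
    rcases Nat.lt_or_ge (i : ℕ) N with hi | hi
    · simp [stv, shv, hi, titer]
    · have hlast : ¬ ((i : Fin (N+1)) : ℕ) < N := by omega
      have ht0 : (0:ℝ) ≤ t := ht.1
      simp [stv, shv, hlast, Qf, max_eq_left ht0]
  | succ n ih =>
    show stepFn N (scaleN N n) (chainState N n (fun _ => t)) = _
    rw [ih]
    exact stv_step hN ht n

lemma chainState_mem (N : ℕ) (m : ℕ) :
    chainState N m ∈ NNclass 1 (N+1) (m+1) (N+1) := by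
  induction m with
  | zero =>
    refine NNclass_congrFun (oneLayer_mem (fun _ _ => (1:ℝ) : Matrix (Fin (N+1)) (Fin 1) ℝ)
      (shv N) 1 0) ?_
    intro z
    funext i
    show ((0 : Fin (N+1) → ℝ) + (1 : Matrix (Fin (N+1)) (Fin (N+1)) ℝ).mulVec _) i = _
    rw [Matrix.one_mulVec]
    have : (Matrix.mulVec (fun _ _ => (1:ℝ)) z) i = z 0 := by
      simp [Matrix.mulVec, dotProduct, Fin.sum_univ_one]
    simp [chainState, this]
  | succ n ih =>
    have hstep : (fun x : Fin (N+1) → ℝ => stepFn N (scaleN N n) x)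
        ∈ NNclass (N+1) (N+1) 1 (N+1) := by
      refine NNclass_congrFun (oneLayer_mem (stepMat N (scaleN N n)) (shv N) 1 0) ?_
      intro x
      funext i
      show ((0 : Fin (N+1) → ℝ) + (1 : Matrix (Fin (N+1)) (Fin (N+1)) ℝ).mulVec _) i = _
      rw [Matrix.one_mulVec]
      simp [stepFn]
    exact NNclass_congrFun (comp_mem (by omega) (by omega) ih hstep) (fun z => rfl)

noncomputable def outRow (N L : ℕ) : Matrix (Fin 1) (Fin (N+1)) ℝ :=
  fun _ j => if (j:ℕ) < N then -(scaleN N (L-1)) * dc N j else 1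

noncomputable def sqF (N L : ℕ) : (Fin 1 → ℝ) → (Fin 1 → ℝ) :=
  fun z => 0 + (outRow N L).mulVec (chainState N (L-1) z)

lemma sqF_mem (N : ℕ) {L : ℕ} (hL : 0 < L) : sqF N L ∈ NNclass 1 1 L (N+1) := by
  have h := mem_post_affine (chainState_mem N (L-1)) (outRow N L) 0
  rwa [Nat.sub_add_cancel hL] at h

lemma sqF_eval {N L : ℕ} (hN : 0 < N) (hL : 0 < L) {t : ℝ} (ht : t ∈ Set.Icc (0:ℝ) 1) :
    sqF N L (fun _ => t) 0 = Qf N L t := by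
  show (0 + (outRow N L).mulVec (chainState N (L-1) (fun _ => t))) 0 = _
  rw [chainState_stv hN ht (L-1)]
  simp only [Pi.add_apply, Pi.zero_apply, zero_add, Matrix.mulVec, dotProduct]
  rw [Fin.sum_univ_castSucc]
  have hNlt : ¬ ((Fin.last N : Fin (N+1)) : ℕ) < N := by simp
  have h1 : outRow N L 0 (Fin.last N) * stv N (L-1) t (Fin.last N) = Qf N (L-1) t := by
    simp [outRow, stv, hNlt]
  have h2 : ∑ j : Fin N, outRow N L 0 j.castSucc * stv N (L-1) t j.castSucc
      = -(scaleN N (L-1) * Dcomb N (titer N (L-1) t)) := by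
    rw [← sum_fin_dc]
    rw [Finset.mul_sum, ← Finset.sum_neg_distrib]
    apply Finset.sum_congr rfl
    intro j _
    have hj : ((j.castSucc : Fin (N+1)) : ℕ) < N := by simp
    simp [outRow, stv, hj]
    ring
  rw [h1, h2]
  have hQL : Qf N L t = Qf N (L-1) t - Dcomb N (titer N (L-1) t) / (N:ℝ)^(2*(L-1)) := by
    conv_lhs => rw [show L = (L-1)+1 by omega]
    rfl
  rw [hQL, scaleN, div_eq_mul_inv]
  ring

noncomputable def Mm : Matrix (Fin 1) (Fin 2) ℝ := fun _ _ => 1/2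
noncomputable def Mp : Matrix (Fin 1) (Fin 2) ℝ := fun _ j => if (j:ℕ) = 0 then 1 else 0
noncomputable def Mz : Matrix (Fin 1) (Fin 2) ℝ := fun _ j => if (j:ℕ) = 0 then 0 else 1

lemma Mm_eval (z : Fin 2 → ℝ) : Mm.mulVec z + 0 = fun _ => (z 0 + z 1)/2 := by
  funext i
  simp [Mm, Matrix.mulVec, dotProduct, Fin.sum_univ_two]
  ring

lemma Mp_eval (z : Fin 2 → ℝ) : Mp.mulVec z + 0 = fun _ => z 0 := by
  funext i
  simp [Mp, Matrix.mulVec, dotProduct, Fin.sum_univ_two]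

lemma Mz_eval (z : Fin 2 → ℝ) : Mz.mulVec z + 0 = fun _ => z 1 := by
  funext i
  simp [Mz, Matrix.mulVec, dotProduct, Fin.sum_univ_two]

noncomputable def tripF (N L : ℕ) : (Fin 2 → ℝ) → (Fin (1+(1+1)) → ℝ) :=
  fun z => Fin.append (sqF N L (Mm.mulVec z + 0))
    (Fin.append (sqF N L (Mp.mulVec z + 0)) (sqF N L (Mz.mulVec z + 0)))

lemma tripF_mem (N : ℕ) {L : ℕ} (hL : 0 < L) :
    tripF N L ∈ NNclass 2 (1+(1+1)) L ((N+1)+((N+1)+(N+1))) := by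
  have hm := mem_pre_affine (sqF_mem N hL) Mm 0
  have hp := mem_pre_affine (sqF_mem N hL) Mp 0
  have hz := mem_pre_affine (sqF_mem N hL) Mz 0
  exact mem_parallel hm (mem_parallel hp hz)

noncomputable def crow : Matrix (Fin 1) (Fin (1+(1+1))) ℝ :=
  fun _ j => if (j:ℕ) = 0 then 2 else -(1/2)

noncomputable def clamp01 (y : ℝ) : ℝ := max y 0 - max (y - 1) 0

lemma clamp01_mem (y : ℝ) : clamp01 y ∈ Set.Icc (0:ℝ) 1 := by
  rcases le_total y 0 with h | h
  · rw [clamp01, max_eq_right h, max_eq_right (by linarith : y - 1 ≤ 0)]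
    norm_num
  · rcases le_total y 1 with h1 | h1
    · rw [clamp01, max_eq_left h, max_eq_right (by linarith : y - 1 ≤ 0)]
      constructor <;> linarith
    · rw [clamp01, max_eq_left h, max_eq_left (by linarith : 0 ≤ y - 1)]
      constructor <;> linarith

lemma clamp01_close {y c : ℝ} (hc : c ∈ Set.Icc (0:ℝ) 1) : |clamp01 y - c| ≤ |y - c| := by
  obtain ⟨hc0, hc1⟩ := hc
  rcases le_total y 0 with h | h
  · rw [clamp01, max_eq_right h, max_eq_right (by linarith : y - 1 ≤ 0)]
    rw [abs_of_nonpos (by linarith), abs_of_nonpos (by linarith)]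
    linarith
  · rcases le_total y 1 with h1 | h1
    · rw [clamp01, max_eq_left h, max_eq_right (by linarith : y - 1 ≤ 0)]
      simp
    · rw [clamp01, max_eq_left h, max_eq_left (by linarith : 0 ≤ y - 1)]
      rw [abs_of_nonneg (by linarith), abs_of_nonneg (by linarith)]
      linarith

noncomputable def clampF : (Fin 1 → ℝ) → (Fin 1 → ℝ) := fun y _ => clamp01 (y 0)

lemma clampF_mem : clampF ∈ NNclass 1 1 1 2 := by
  refine NNclass_congrFun (oneLayer_mem
    (fun _ _ => (1:ℝ) : Matrix (Fin 2) (Fin 1) ℝ)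
    (fun i => if (i:ℕ) = 0 then 0 else 1)
    (fun _ j => if (j:ℕ) = 0 then 1 else -1 : Matrix (Fin 1) (Fin 2) ℝ) 0) ?_
  intro y
  funext o
  simp only [Pi.add_apply, Pi.zero_apply, zero_add, Matrix.mulVec, dotProduct,
    Fin.sum_univ_two, Fin.sum_univ_one, one_mul, Fin.val_zero, Fin.val_one]
  norm_num [clampF, clamp01]
  ring

noncomputable def clampAffF : (Fin (1+(1+1)) → ℝ) → (Fin 1 → ℝ) :=
  fun y => clampF (crow.mulVec y + 0)

lemma clampAffF_mem : clampAffF ∈ NNclass (1+(1+1)) 1 1 2 :=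
  mem_pre_affine clampF_mem crow 0

noncomputable def gateF (N L : ℕ) : (Fin 2 → ℝ) → (Fin 1 → ℝ) :=
  fun z => clampAffF (tripF N L z)

lemma gateF_mem (N : ℕ) {L : ℕ} (hN : 0 < N) (hL : 0 < L) :
    gateF N L ∈ NNclass 2 1 (L+1) (3*N+3) := by
  have h1 := mem_width_mono (by omega : (N+1)+((N+1)+(N+1)) ≤ 3*N+3) (tripF_mem N hL)
  have h2 := mem_width_mono (by omega : 2 ≤ 3*N+3) clampAffF_mem
  exact NNclass_congrFun (comp_mem (by omega) (by omega) h1 h2) (fun z => rfl)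

lemma crow_eval (a b c : Fin 1 → ℝ) :
    (crow.mulVec (Fin.append a (Fin.append b c)) + 0) 0
      = 2 * a 0 - (1/2) * b 0 - (1/2) * c 0 := by
  simp only [Pi.add_apply, Pi.zero_apply, add_zero, Matrix.mulVec, dotProduct]
  rw [Fin.sum_univ_add]
  rw [Fin.sum_univ_add]
  simp only [Fin.sum_univ_one, Fin.append_left, Fin.append_right, crow]
  norm_num
  ring

lemma gateF_eval {N L : ℕ} (hN : 0 < N) (hL : 0 < L) {z : Fin 2 → ℝ}
    (h0 : z 0 ∈ Set.Icc (0:ℝ) 1) (h1 : z 1 ∈ Set.Icc (0:ℝ) 1) :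
    gateF N L z 0 = clamp01 (2 * Qf N L ((z 0 + z 1)/2)
      - (1/2) * Qf N L (z 0) - (1/2) * Qf N L (z 1)) := by
  have hm : (z 0 + z 1)/2 ∈ Set.Icc (0:ℝ) 1 := by
    constructor
    · linarith [h0.1, h1.1]
    · linarith [h0.2, h1.2]
  show clampAffF (tripF N L z) 0 = _
  rw [clampAffF, clampF]
  congr 1
  rw [tripF, Mm_eval, Mp_eval, Mz_eval, crow_eval]
  rw [sqF_eval hN hL hm, sqF_eval hN hL h0, sqF_eval hN hL h1]

lemma gateF_range (N L : ℕ) (z : Fin 2 → ℝ) : gateF N L z 0 ∈ Set.Icc (0:ℝ) 1 := by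
  show clampAffF (tripF N L z) 0 ∈ _
  rw [clampAffF, clampF]
  exact clamp01_mem _

lemma gateF_err {N L : ℕ} (hN : 0 < N) (hL : 0 < L) {z : Fin 2 → ℝ}
    (h0 : z 0 ∈ Set.Icc (0:ℝ) 1) (h1 : z 1 ∈ Set.Icc (0:ℝ) 1) :
    |gateF N L z 0 - z 0 * z 1| ≤ ((N:ℝ)^(2*L))⁻¹ / 2 := by
  have hm : (z 0 + z 1)/2 ∈ Set.Icc (0:ℝ) 1 := by
    constructor
    · linarith [h0.1, h1.1]
    · linarith [h0.2, h1.2]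
  have hc : z 0 * z 1 ∈ Set.Icc (0:ℝ) 1 := by
    constructor
    · exact mul_nonneg h0.1 h1.1
    · calc z 0 * z 1 ≤ 1 * 1 := by
            apply mul_le_mul h0.2 h1.2 h1.1 (by norm_num)
        _ = 1 := by norm_num
  rw [gateF_eval hN hL h0 h1]
  set y := 2 * Qf N L ((z 0 + z 1)/2) - (1/2) * Qf N L (z 0) - (1/2) * Qf N L (z 1) with hy
  have hclose := clamp01_close (y := y) hc
  have hyv : |y - z 0 * z 1| ≤ ((N:ℝ)^(2*L))⁻¹ / 2 := by
    obtain ⟨em0, em1⟩ := Qf_err hN hm L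
    obtain ⟨e00, e01⟩ := Qf_err hN h0 L
    obtain ⟨e10, e11⟩ := Qf_err hN h1 L
    have hsq : 2 * ((z 0 + z 1)/2)^2 - (1/2) * (z 0)^2 - (1/2) * (z 1)^2 = z 0 * z 1 := by
      ring
    rw [abs_le]
    constructor <;> nlinarith
  exact le_trans hclose hyv

def e2 (r : ℕ) : Fin 2 → Fin (r+2) := Fin.castLE (by omega)

noncomputable def indMat {m n : ℕ} (e : Fin m → Fin n) : Matrix (Fin m) (Fin n) ℝ :=
  fun i j => if (j:ℕ) = ((e i):ℕ) then 1 else 0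

noncomputable def proj2 (r : ℕ) : Matrix (Fin 2) (Fin (r+2)) ℝ := indMat (e2 r)

def eR (r : ℕ) : Fin r → Fin (r+2) := fun i => ⟨(i:ℕ)+2, by omega⟩

noncomputable def projR (r : ℕ) : Matrix (Fin r) (Fin (r+2)) ℝ := indMat (eR r)

lemma mulVec_ind {m n : ℕ} (e : Fin m → Fin n) (w : Fin n → ℝ) (i : Fin m) :
    ((indMat e).mulVec w) i = w (e i) := by
  simp only [indMat, Matrix.mulVec, dotProduct]
  rw [Finset.sum_eq_single (e i)]
  · simp
  · intro j _ hj
    have hne : (j:ℕ) ≠ ((e i):ℕ) := fun h => hj (Fin.ext h)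
    simp [hne]
  · intro h
    exact absurd (Finset.mem_univ _) h

lemma proj2_eval (r : ℕ) (w : Fin (r+2) → ℝ) :
    (proj2 r).mulVec w + 0 = fun j : Fin 2 => w (e2 r j) := by
  funext j
  simp only [Pi.add_apply, Pi.zero_apply, add_zero]
  exact mulVec_ind (e2 r) w j -- proj2 = indMat (e2 r)

lemma projR_eval (r : ℕ) (w : Fin (r+2) → ℝ) :
    (projR r).mulVec w + 0 = fun j : Fin r => w (eR r j) := by
  funext j
  simp only [Pi.add_apply, Pi.zero_apply, add_zero]
  exact mulVec_ind (eR r) w j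

noncomputable def stageF (N L r : ℕ) : (Fin (r+2) → ℝ) → (Fin (r+1) → ℝ) :=
  fun w i => if h : (i:ℕ) = 0 then gateF N L (fun j => w (e2 r j)) 0
    else max (w ⟨(i:ℕ)+1, by omega⟩) 0

lemma stageF_mem {N L : ℕ} (hN : 0 < N) (hL : 0 < L) (r : ℕ) :
    stageF N L r ∈ NNclass (r+2) (r+1) (L+1) ((3*N+3)+r) := by
  have hg := mem_pre_affine (gateF_mem N hN hL) (proj2 r) 0
  have hp := mem_pre_affine (reluId_mem r (L+1) (by omega)) (projR r) 0
  have hpar := mem_parallel hg hp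
  refine mem_congr_q (by omega : 1 + r = r + 1) hpar ?_
  intro w i
  rcases Nat.eq_zero_or_pos (i:ℕ) with h0 | h0
  · have hcast : (Fin.cast (by omega : (1:ℕ) + r = r + 1).symm i) = Fin.castAdd r 0 :=
      Fin.ext (by simp [h0])
    rw [hcast, Fin.append_left]
    show stageF N L r w i = gateF N L ((proj2 r).mulVec w + 0) 0
    rw [proj2_eval]
    simp [stageF, h0]
  · have hlt : (i:ℕ) - 1 < r := by omega
    have hcast : (Fin.cast (by omega : (1:ℕ) + r = r + 1).symm i)
        = Fin.natAdd 1 ⟨(i:ℕ) - 1, hlt⟩ := Fin.ext (by simp; omega)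
    rw [hcast, Fin.append_right]
    show stageF N L r w i = max (((projR r).mulVec w + 0) ⟨(i:ℕ) - 1, hlt⟩) 0
    rw [projR_eval]
    have hne : ¬ ((i:ℕ) = 0) := by omega
    have hidx : eR r ⟨(i:ℕ) - 1, hlt⟩ = ⟨(i:ℕ)+1, by omega⟩ := Fin.ext (by simp [eR]; omega)
    simp only [stageF, hne, dif_neg, not_false_iff]
    rw [hidx]

noncomputable def PsiF (N L : ℕ) : (k : ℕ) → (Fin (k+2) → ℝ) → (Fin 1 → ℝ)
  | 0 => stageF N L 0
  | (k+1) => fun w => PsiF N L k (stageF N L (k+1) w)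

lemma PsiF_mem {N L : ℕ} (hN : 0 < N) (hL : 0 < L) (W : ℕ) :
    ∀ k, (3*N+3) + k ≤ W → PsiF N L k ∈ NNclass (k+2) 1 ((k+1)*(L+1)) W := by
  intro k
  induction k with
  | zero =>
    intro hW
    have h := mem_width_mono (by omega : (3*N+3) + 0 ≤ W) (stageF_mem hN hL 0)
    rw [show (0+1)*(L+1) = L+1 by ring]
    exact h
  | succ n ih =>
    intro hW
    have hs := mem_width_mono (by omega : (3*N+3) + (n+1) ≤ W) (stageF_mem hN hL (n+1))
    have hp := ih (by omega)
    have hc := comp_mem (by omega) (Nat.mul_pos (by omega) (by omega)) hs hp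
    rw [show (n+1+1)*(L+1) = (L+1) + (n+1)*(L+1) by ring]
    exact NNclass_congrFun hc (fun z => rfl)

lemma stageF_zero {N L r : ℕ} (w : Fin (r+2) → ℝ) :
    stageF N L r w 0 = gateF N L (fun j => w (e2 r j)) 0 := by
  simp [stageF]

lemma stageF_succ {N L r : ℕ} (w : Fin (r+2) → ℝ) (j : Fin r) :
    stageF N L r w j.succ = max (w ⟨(j:ℕ)+2, by omega⟩) 0 := by
  have h : ((j.succ : Fin (r+1)):ℕ) ≠ 0 := by simp
  simp only [stageF, h, dif_neg, not_false_iff]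
  have hidx : (⟨((j.succ : Fin (r+1)):ℕ)+1, by omega⟩ : Fin (r+2))
      = (⟨(j:ℕ)+2, by omega⟩ : Fin (r+2)) := by
    apply Fin.ext
    simp
  rw [hidx]

lemma PsiF_err {N L : ℕ} (hN : 0 < N) (hL : 0 < L) :
    ∀ k (w : Fin (k+2) → ℝ), (∀ i, w i ∈ Set.Icc (0:ℝ) 1) →
      |PsiF N L k w 0 - ∏ i, w i| ≤ ((k:ℝ)+1) * (((N:ℝ)^(2*L))⁻¹/2)
        ∧ PsiF N L k w 0 ∈ Set.Icc (0:ℝ) 1 := by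
  intro k
  induction k with
  | zero =>
    intro w hw
    have hv : (fun j : Fin 2 => w (e2 0 j)) = w := by
      funext j
      apply congrArg
      apply Fin.ext
      simp [e2]
    constructor
    · have h := gateF_err hN hL (z := w) (hw 0) (hw 1)
      show |stageF N L 0 w 0 - ∏ i, w i| ≤ _
      rw [stageF_zero, hv, Fin.prod_univ_two]
      linarith [h]
    · show stageF N L 0 w 0 ∈ _
      rw [stageF_zero, hv]
      exact gateF_range N L w
  | succ n ih =>
    intro w hw
    set w' : Fin (n+2) → ℝ := stageF N L (n+1) w with hw'
    have hz : (fun j : Fin 2 => w (e2 (n+1) j)) 0 = w 0 := by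
      apply congrArg; apply Fin.ext; simp [e2]
    have hz1 : (fun j : Fin 2 => w (e2 (n+1) j)) 1 = w 1 := by
      apply congrArg; apply Fin.ext; simp [e2]
    have hw'0 : w' 0 = gateF N L (fun j => w (e2 (n+1) j)) 0 := stageF_zero w
    have hw'mem : ∀ i, w' i ∈ Set.Icc (0:ℝ) 1 := by
      intro i
      rcases Fin.eq_zero_or_eq_succ i with h0 | ⟨j, rfl⟩
      · rw [h0, hw'0]
        exact gateF_range N L _
      · rw [hw', stageF_succ]
        have := hw ⟨(j:ℕ)+2, by omega⟩
        rw [max_eq_left this.1]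
        exact this
    obtain ⟨ih1, ih2⟩ := ih w' hw'mem
    have herr : |w' 0 - w 0 * w 1| ≤ ((N:ℝ)^(2*L))⁻¹/2 := by
      rw [hw'0]
      have := gateF_err hN hL (z := fun j : Fin 2 => w (e2 (n+1) j))
        (by rw [show w (e2 (n+1) 0) = w 0 from hz]; exact hw 0) (by rw [show w (e2 (n+1) 1) = w 1 from hz1]; exact hw 1)
      rw [show w (e2 (n+1) 0) = w 0 from hz, show w (e2 (n+1) 1) = w 1 from hz1] at this
      exact this
    have hsucc : ∀ j : Fin (n+1), w' j.succ = w j.succ.succ := by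
      intro j
      rw [hw', stageF_succ]
      have hidx : (⟨(j:ℕ)+2, by omega⟩ : Fin (n+3)) = j.succ.succ := by
        apply Fin.ext; simp
      rw [hidx, max_eq_left (hw _).1]
    set P : ℝ := ∏ j : Fin (n+1), w j.succ.succ with hP
    have hP0 : 0 ≤ P := Finset.prod_nonneg (fun j _ => (hw _).1)
    have hP1 : P ≤ 1 := Finset.prod_le_one (fun j _ => (hw _).1) (fun j _ => (hw _).2)
    have hprodw : ∏ i, w i = w 0 * w 1 * P := by
      rw [Fin.prod_univ_succ, Fin.prod_univ_succ, hP]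
      have h01 : w ((0 : Fin (n+2)).succ) = w 1 := by
        apply congrArg; apply Fin.ext; simp
      rw [h01]
      ring
    have hprodw' : ∏ i, w' i = w' 0 * P := by
      rw [Fin.prod_univ_succ, hP]
      congr 1
      exact Finset.prod_congr rfl (fun j _ => hsucc j)
    constructor
    · show |PsiF N L n w' 0 - ∏ i, w i| ≤ _
      have h1 : |PsiF N L n w' 0 - ∏ i, w' i| ≤ ((n:ℝ)+1) * (((N:ℝ)^(2*L))⁻¹/2) := ih1
      have h2 : |(∏ i, w' i) - ∏ i, w i| ≤ ((N:ℝ)^(2*L))⁻¹/2 := by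
        rw [hprodw, hprodw']
        rw [show w' 0 * P - w 0 * w 1 * P = (w' 0 - w 0 * w 1) * P by ring]
        rw [abs_mul, abs_of_nonneg hP0]
        calc |w' 0 - w 0 * w 1| * P ≤ (((N:ℝ)^(2*L))⁻¹/2) * 1 := by
              apply mul_le_mul herr hP1 hP0 (by positivity)
          _ = ((N:ℝ)^(2*L))⁻¹/2 := by ring
      calc |PsiF N L n w' 0 - ∏ i, w i|
          ≤ |PsiF N L n w' 0 - ∏ i, w' i| + |(∏ i, w' i) - ∏ i, w i| := by
            have := abs_sub_le (PsiF N L n w' 0) (∏ i, w' i) (∏ i, w i)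
            linarith
        _ ≤ ((n:ℝ)+1) * (((N:ℝ)^(2*L))⁻¹/2) + ((N:ℝ)^(2*L))⁻¹/2 := by linarith
        _ = (((n:ℕ):ℝ)+1+1) * (((N:ℝ)^(2*L))⁻¹/2) := by ring
        _ = (((n+1:ℕ):ℝ)+1) * (((N:ℝ)^(2*L))⁻¹/2) := by push_cast; ring
    · exact ih2

/-- For any positive integers `N, L, d` with `d ≥ 2`, there is a ReLU
network `φ×^d ∈ F_{d,1}((L+1)(d−1)+d−2, 9N+d−2)` with
`|φ×^d(z) − ∏ᵢzᵢ| ≤ 12(d−1)N^{−L}` and `|φ×^d(z)| ≤ 1` on `[0,1]^d`. -/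
theorem statement7 (N L d : ℕ) (hN : 0 < N) (hL : 0 < L) (hd : 2 ≤ d) :
    ∃ φ ∈ NNscalar d ((L + 1) * (d - 1) + d - 2) (9 * N + d - 2),
      (∀ z : Fin d → ℝ, (∀ i, z i ∈ Set.Icc (0 : ℝ) 1) →
        |φ z - ∏ i, z i| ≤ 12 * ((d : ℝ) - 1) * ((N : ℝ) ^ L)⁻¹) ∧
      ∀ z : Fin d → ℝ, (∀ i, z i ∈ Set.Icc (0 : ℝ) 1) → |φ z| ≤ 1 := by
  have hdim : (d - 2) + 2 = d := by omega
  set W9 := 9 * N + d - 2 with hW9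
  set T := (L + 1) * (d - 1) + d - 2 with hT
  have hΨ : PsiF N L (d-2) ∈ NNclass ((d-2)+2) 1 ((d-2+1)*(L+1)) W9 :=
    PsiF_mem hN hL W9 (d-2) (by omega)
  have hdep1 : 1 ≤ (d-2+1)*(L+1) := Nat.mul_pos (by omega) (by omega)
  have hdepth : (d-2+1)*(L+1) ≤ T := by
    have h1 : d - 1 = d - 2 + 1 := by omega
    have h2 : (L+1) * (d-1) = (d-2+1)*(L+1) := by rw [h1, Nat.mul_comm]
    calc (d-2+1)*(L+1) = (L+1)*(d-1) := h2.symm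
      _ ≤ (L+1)*(d-1) + (d-2) := Nat.le_add_right _ _
      _ = T := by rw [hT]; omega
  have hΨ' : PsiF N L (d-2) ∈ NNclass ((d-2)+2) 1 T W9 :=
    mem_depth_mono hdep1 hdepth hΨ
  set g : (Fin d → ℝ) → (Fin 1 → ℝ) :=
    fun z => PsiF N L (d-2) (fun i => z (Fin.cast hdim i)) with hg
  have hgmem : g ∈ NNclass d 1 T W9 := mem_congr_d hdim hΨ'
  refine ⟨fun z => g z 0, ⟨g, hgmem, fun z => rfl⟩, ?_, ?_⟩
  · intro z hz
    set w : Fin ((d-2)+2) → ℝ := fun i => z (Fin.cast hdim i) with hw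
    have hwmem : ∀ i, w i ∈ Set.Icc (0:ℝ) 1 := fun i => hz _
    obtain ⟨herr, hrange⟩ := PsiF_err hN hL (d-2) w hwmem
    have hprod : ∏ i, w i = ∏ i, z i :=
      Fintype.prod_equiv (finCongr hdim) w z (fun i => rfl)
    rw [hprod] at herr
    have hcast : (((d-2 : ℕ)):ℝ) + 1 = (d:ℝ) - 1 := by
      have : ((d - 2 : ℕ):ℝ) = (d:ℝ) - 2 := by
        push_cast [Nat.cast_sub hd]
        ring
      rw [this]; ring
    rw [hcast] at herr
    have hd1 : (0:ℝ) ≤ (d:ℝ) - 1 := by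
      have : (2:ℝ) ≤ (d:ℝ) := by exact_mod_cast hd
      linarith
    have hNR : (1:ℝ) ≤ (N:ℝ) := by exact_mod_cast hN
    have hple : ((N:ℝ)^(2*L))⁻¹ ≤ ((N:ℝ)^L)⁻¹ := by
      apply inv_anti₀
      · positivity
      · exact pow_le_pow_right₀ hNR (by omega)
    have hfin : ((d:ℝ) - 1) * (((N:ℝ)^(2*L))⁻¹/2) ≤ 12 * ((d:ℝ) - 1) * ((N:ℝ)^L)⁻¹ := by
      have h1 : ((N:ℝ)^(2*L))⁻¹/2 ≤ ((N:ℝ)^L)⁻¹ := by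
        have : (0:ℝ) ≤ ((N:ℝ)^L)⁻¹ := by positivity
        linarith
      nlinarith [hd1, h1, (by positivity : (0:ℝ) ≤ ((N:ℝ)^L)⁻¹)]
    calc |g z 0 - ∏ i, z i| ≤ ((d:ℝ) - 1) * (((N:ℝ)^(2*L))⁻¹/2) := herr
      _ ≤ 12 * ((d:ℝ) - 1) * ((N:ℝ)^L)⁻¹ := hfin
  · intro z hz
    set w : Fin ((d-2)+2) → ℝ := fun i => z (Fin.cast hdim i) with hw
    have hwmem : ∀ i, w i ∈ Set.Icc (0:ℝ) 1 := fun i => hz _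
    obtain ⟨_, hrange⟩ := PsiF_err hN hL (d-2) w hwmem
    rw [abs_le]
    exact ⟨by linarith [hrange.1], hrange.2⟩
end

section
/- Let L* be a nonnegative integer and let p₀, p₁, …, p_{L*} be positive real numbers. Define the sequence (p̃ᵢ) by p̃₀ = p₀ and p̃ᵢ = min{ p̃_{i−1}·pᵢ, p̃_{i−1}, pᵢ } for i = 1,…,L*. Then p̃_{L*} ≤ min_{0≤i≤L*} pᵢ ∏_{s=i+1}^{L*} min(pₛ, 1), with the convention that the empty product ∏_{s=L*+1}^{L*} min(pₛ,1) equals 1. -/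
open Finset

/-- If `p̃₀ = p₀` and `p̃ᵢ = min{p̃_{i−1}·pᵢ, p̃_{i−1}, pᵢ}` for
`i = 1,…,L*`, with all `pᵢ > 0`, then
`p̃_{L*} ≤ min_{0≤i≤L*} pᵢ ∏_{s=i+1}^{L*} min(pₛ,1)`. -/
theorem statement14 (Lstar : ℕ) (p : ℕ → ℝ) (hp : ∀ i ≤ Lstar, 0 < p i)
    (pt : ℕ → ℝ) (h0 : pt 0 = p 0)
    (hrec : ∀ i, pt (i + 1) = min (min (pt i * p (i + 1)) (pt i)) (p (i + 1))) :
    ∀ i ≤ Lstar, pt Lstar ≤ p i * ∏ s ∈ Finset.Ioc i Lstar, min (p s) 1 := by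
  revert hp
  induction Lstar with
  | zero =>
    intro hp i hi
    interval_cases i
    simp [h0]
  | succ L ih =>
    intro hp i hi
    have hp' : ∀ j ≤ L, 0 < p j := fun j hj => hp j (Nat.le_succ_of_le hj)
    rcases Nat.lt_or_ge i (L + 1) with h | h
    · have hi' : i ≤ L := Nat.lt_succ_iff.mp h
      have hQ : pt L ≤ p i * ∏ s ∈ Finset.Ioc i L, min (p s) 1 := ih hp' i hi'
      rw [Finset.prod_Ioc_succ_top hi', hrec L, ← mul_assoc]
      by_cases hple : p (L + 1) ≤ 1
      · rw [min_eq_left hple]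
        calc min (min (pt L * p (L + 1)) (pt L)) (p (L + 1))
            ≤ pt L * p (L + 1) := le_trans (min_le_left _ _) (min_le_left _ _)
          _ ≤ (p i * ∏ s ∈ Finset.Ioc i L, min (p s) 1) * p (L + 1) :=
              mul_le_mul_of_nonneg_right hQ (hp (L + 1) le_rfl).le
      · rw [min_eq_right (le_of_not_ge hple), mul_one]
        calc min (min (pt L * p (L + 1)) (pt L)) (p (L + 1))
            ≤ pt L := le_trans (min_le_left _ _) (min_le_right _ _)
          _ ≤ _ := hQ
    · have : i = L + 1 := le_antisymm hi h
      subst this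
      simp [hrec L, min_le_right]
end
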